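/- arXiv:1711.06201 — 8 statements merged into one kernel-verified Lean document; each statement's English description precedes it below -/
import Mathlib

section
/- Fix an integer p ≥ 0 and let L_G be the Glauber generator on Ω*_p with rate functions c_k, k ∈ Λ*_p, expanded as c_k = Σ_{A⊆Λ*_p} R_{k,A} Ψ_A. Then the functions L_G Ψ_{{j}} are polynomials of order 1 for every j ∈ Λ*_p and the functions L_G Ψ_{{j,k}} are polynomials of order 2 for every pair j ≠ k in Λ*_p, if and only if for every j ∈ Λ*_p and every η ∈ Ω*_p one has c_j(η) = R_{j,∅} + R_{j,{j}} η_j + Σ_{k≠j} R_{j,{k}} η_k (1 − 2η_j). -/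
open Finset

/-- Occupation value of a site. -/
def occ (b : Bool) : ℝ := if b then 1 else 0

/-- Flip the occupation variable at site `i`. -/
def flipCfg {m : ℕ} (η : Fin m → Bool) (i : Fin m) : Fin m → Bool :=
  Function.update η i (!(η i))

/-- `Ψ_A(η) = ∏_{k ∈ A} η_k`.  The sites of `Λ*_p = {-p, …, 0}` are indexed by
`Fin (p+1)`, index `i` corresponding to site `i - p`. -/
def Psi {m : ℕ} (A : Finset (Fin m)) (η : Fin m → Bool) : ℝ := ∏ k ∈ A, occ (η k)

/-- `f` is a polynomial of order `n`: a linear combination of `Ψ_A` with `|A| ≤ n`. -/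
def IsPolyOfOrder {m : ℕ} (n : ℕ) (f : (Fin m → Bool) → ℝ) : Prop :=
  f ∈ Submodule.span ℝ {g : (Fin m → Bool) → ℝ |
    ∃ A : Finset (Fin m), A.card ≤ n ∧ g = Psi A}

/-- The rate `c_k` expanded in the basis `Ψ_A` with coefficients `R k A`:
`c_k = Σ_{A ⊆ Λ*_p} R_{k,A} Ψ_A`. -/
def rateFromCoeff {m : ℕ} (R : Fin m → Finset (Fin m) → ℝ) (k : Fin m)
    (η : Fin m → Bool) : ℝ :=
  ∑ A : Finset (Fin m), R k A * Psi A η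

/-- The Glauber generator with rate functions `c_k`. -/
def glauberGen {m : ℕ} (c : Fin m → (Fin m → Bool) → ℝ)
    (f : (Fin m → Bool) → ℝ) (η : Fin m → Bool) : ℝ :=
  ∑ k : Fin m, c k η * (f (flipCfg η k) - f η)

-- ### auxiliary lemmas
-- occ lemmas
lemma occ_mul_self (b : Bool) : occ b * occ b = occ b := by cases b <;> simp [occ]

lemma occ_not (b : Bool) : occ (!b) = 1 - occ b := by cases b <;> simp [occ]

lemma occ_mul_one_sub_two (b : Bool) : occ b * (1 - 2 * occ b) = -occ b := by
  cases b <;> norm_num [occ]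

lemma one_sub_two_occ_sq (b : Bool) : (1 - 2 * occ b) * (1 - 2 * occ b) = 1 := by
  cases b <;> norm_num [occ]

-- ### Psi lemmas
lemma Psi_empty {m : ℕ} (η : Fin m → Bool) : Psi ∅ η = 1 := by simp [Psi]

lemma Psi_singleton {m : ℕ} (k : Fin m) (η : Fin m → Bool) : Psi {k} η = occ (η k) := by
  simp [Psi]

lemma Psi_insert {m : ℕ} {A : Finset (Fin m)} {k : Fin m} (hk : k ∉ A) (η : Fin m → Bool) :
    Psi (insert k A) η = occ (η k) * Psi A η := by
  simp [Psi, Finset.prod_insert hk]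

lemma Psi_pair {m : ℕ} {j k : Fin m} (h : j ≠ k) (η : Fin m → Bool) :
    Psi {j, k} η = occ (η j) * occ (η k) := by
  rw [show ({j, k} : Finset (Fin m)) = insert j {k} from rfl,
    Psi_insert (by simpa using h), Psi_singleton]

lemma Psi_erase_of_mem {m : ℕ} {A : Finset (Fin m)} {k : Fin m} (hk : k ∈ A)
    (η : Fin m → Bool) : Psi A η = occ (η k) * Psi (A.erase k) η :=
  (Finset.mul_prod_erase A _ hk).symm

lemma Psi_mul_occ {m : ℕ} (A : Finset (Fin m)) (k : Fin m) (η : Fin m → Bool) :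
    Psi A η * occ (η k) = Psi (insert k A) η := by
  by_cases hk : k ∈ A
  · rw [Finset.insert_eq_self.2 hk, Psi_erase_of_mem hk η]
    rw [mul_comm (occ (η k)), mul_assoc, occ_mul_self]
  · rw [Psi_insert hk, mul_comm]

-- ### chi and coeffAt
def chi {m : ℕ} (B : Finset (Fin m)) : Fin m → Bool := fun i => decide (i ∈ B)

noncomputable def coeffAt {m : ℕ} (A : Finset (Fin m)) (f : (Fin m → Bool) → ℝ) : ℝ :=
  ∑ B ∈ A.powerset, (-1 : ℝ) ^ ((A \ B).card) * f (chi B)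

lemma Psi_chi {m : ℕ} (C B : Finset (Fin m)) :
    Psi C (chi B) = if C ⊆ B then 1 else 0 := by
  by_cases h : C ⊆ B
  · rw [if_pos h]
    apply Finset.prod_eq_one
    intro k hk
    simp [chi, h hk, occ]
  · rw [if_neg h]
    obtain ⟨k, hkC, hkB⟩ := Finset.not_subset.1 h
    apply Finset.prod_eq_zero hkC
    simp [chi, hkB, occ]

lemma neg_one_pow_sum {α : Type*} [DecidableEq α] (s : Finset α) :
    ∑ E ∈ s.powerset, (-1 : ℝ) ^ E.card = if s = ∅ then 1 else 0 := by
  have := Finset.sum_powerset_neg_one_pow_card (x := s)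
  have h2 := congrArg (fun z : ℤ => (z : ℝ)) this
  push_cast at h2
  simpa using h2

lemma coeffAt_Psi {m : ℕ} (A C : Finset (Fin m)) :
    coeffAt A (Psi C) = if A = C then 1 else 0 := by
  unfold coeffAt
  simp only [Psi_chi, mul_ite, mul_one, mul_zero]
  rw [Finset.sum_ite, Finset.sum_const_zero, add_zero]
  by_cases hCA : C ⊆ A
  · have key : ∑ B ∈ (A.powerset).filter (fun B => C ⊆ B), (-1 : ℝ) ^ ((A \ B).card)
        = ∑ E ∈ (A \ C).powerset, (-1 : ℝ) ^ E.card := by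
      refine Finset.sum_nbij' (fun B => A \ B) (fun E => A \ E) ?_ ?_ ?_ ?_ ?_
      · intro B hB
        simp only [Finset.mem_filter, Finset.mem_powerset] at hB ⊢
        exact Finset.sdiff_subset_sdiff le_rfl hB.2
      · intro E hE
        simp only [Finset.mem_filter, Finset.mem_powerset] at hE ⊢
        constructor
        · exact Finset.sdiff_subset
        · intro x hx
          have hxA : x ∈ A := hCA hx
          have hxE : x ∉ E := fun hxE => (Finset.mem_sdiff.1 (hE hxE)).2 hx
          exact Finset.mem_sdiff.2 ⟨hxA, hxE⟩
      · intro B hB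
        simp only [Finset.mem_filter, Finset.mem_powerset] at hB
        exact Finset.sdiff_sdiff_eq_self hB.1
      · intro E hE
        simp only [Finset.mem_powerset] at hE
        exact Finset.sdiff_sdiff_eq_self (hE.trans Finset.sdiff_subset)
      · intros; rfl
    rw [key, neg_one_pow_sum]
    by_cases hAC : A = C
    · simp [hAC]
    · rw [if_neg hAC, if_neg]
      intro h
      exact hAC (Finset.Subset.antisymm (Finset.sdiff_eq_empty_iff_subset.1 h) hCA)
  · rw [if_neg (fun h => hCA h.ge), Finset.filter_false_of_mem, Finset.sum_empty]
    intro B hB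
    simp only [Finset.mem_powerset] at hB
    exact fun hCB => hCA (hCB.trans hB)

lemma coeffAt_sum_delta {m : ℕ} (A : Finset (Fin m)) (d : Finset (Fin m) → ℝ) :
    coeffAt A (fun η => ∑ C : Finset (Fin m), d C * Psi C η) = d A := by
  unfold coeffAt
  have : ∀ B : Finset (Fin m),
      (-1 : ℝ) ^ ((A \ B).card) * (∑ C : Finset (Fin m), d C * Psi C (chi B))
      = ∑ C : Finset (Fin m), d C * ((-1 : ℝ) ^ ((A \ B).card) * Psi C (chi B)) := by
    intro B; rw [Finset.mul_sum]; apply Finset.sum_congr rfl; intros; ring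
  simp only [this]
  rw [Finset.sum_comm]
  have : ∀ C : Finset (Fin m),
      ∑ B ∈ A.powerset, d C * ((-1 : ℝ) ^ ((A \ B).card) * Psi C (chi B))
      = d C * coeffAt A (Psi C) := by
    intro C; rw [coeffAt, Finset.mul_sum]
  simp only [this, coeffAt_Psi, mul_ite, mul_one, mul_zero]
  simp

-- ### coeffAt is linear / vanishes on low-order polynomials
noncomputable def coeffAtL {m : ℕ} (A : Finset (Fin m)) :
    ((Fin m → Bool) → ℝ) →ₗ[ℝ] ℝ :=
  ∑ B ∈ A.powerset, ((-1 : ℝ) ^ ((A \ B).card)) • (LinearMap.proj (chi B))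

lemma coeffAtL_apply {m : ℕ} (A : Finset (Fin m)) (f : (Fin m → Bool) → ℝ) :
    coeffAtL A f = coeffAt A f := by
  simp [coeffAtL, coeffAt, LinearMap.sum_apply, LinearMap.smul_apply, smul_eq_mul]

lemma coeffAt_eq_zero_of_poly {m n : ℕ} {f : (Fin m → Bool) → ℝ}
    (hf : IsPolyOfOrder n f) {A : Finset (Fin m)} (hA : n < A.card) :
    coeffAt A f = 0 := by
  rw [← coeffAtL_apply]
  have : Submodule.span ℝ {g : (Fin m → Bool) → ℝ |
      ∃ C : Finset (Fin m), C.card ≤ n ∧ g = Psi C} ≤ LinearMap.ker (coeffAtL A) := by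
    rw [Submodule.span_le]
    rintro g ⟨C, hC, rfl⟩
    simp only [SetLike.mem_coe, LinearMap.mem_ker, coeffAtL_apply, coeffAt_Psi]
    rw [if_neg]
    rintro rfl
    exact absurd hC (not_le.2 hA)
  exact this hf

-- ### Glauber computation for singletons
lemma glauber_single {m : ℕ} (c : Fin m → (Fin m → Bool) → ℝ) (j : Fin m) :
    glauberGen c (Psi {j}) = fun η => c j η * (1 - 2 * occ (η j)) := by
  funext η
  unfold glauberGen
  rw [Finset.sum_eq_single j]
  · rw [Psi_singleton, Psi_singleton]
    congr 1
    simp only [flipCfg, Function.update_self]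
    rw [occ_not]; ring
  · intro k _ hk
    rw [Psi_singleton, Psi_singleton]
    simp only [flipCfg, Function.update_of_ne (Ne.symm hk)]
    simp
  · simp

-- ### Glauber computation for pairs
lemma glauber_pair {m : ℕ} (c : Fin m → (Fin m → Bool) → ℝ) {j k : Fin m} (hjk : j ≠ k) :
    glauberGen c (Psi {j, k}) = fun η =>
      (glauberGen c (Psi {j}) η) * occ (η k) + (glauberGen c (Psi {k}) η) * occ (η j) := by
  funext η
  rw [glauber_single, glauber_single]
  unfold glauberGen
  rw [show (Finset.univ : Finset (Fin m)) = Finset.univ from rfl,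
    ← Finset.sum_subset (Finset.subset_univ ({j, k} : Finset (Fin m)))]
  · rw [Finset.sum_pair hjk]
    rw [Psi_pair hjk, Psi_pair hjk, Psi_pair hjk]
    have h1 : (flipCfg η j) j = !(η j) := by simp [flipCfg]
    have h2 : (flipCfg η j) k = η k := by simp [flipCfg, Function.update_of_ne (Ne.symm hjk)]
    have h3 : (flipCfg η k) k = !(η k) := by simp [flipCfg]
    have h4 : (flipCfg η k) j = η j := by simp [flipCfg, Function.update_of_ne hjk]
    rw [h1, h2, h3, h4, occ_not, occ_not]
    ring
  · intro l _ hl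
    simp only [Finset.mem_insert, Finset.mem_singleton, not_or] at hl
    have h5 : (flipCfg η l) j = η j :=
      Function.update_of_ne (fun h => hl.1 h.symm) _ _
    have h6 : (flipCfg η l) k = η k :=
      Function.update_of_ne (fun h => hl.2 h.symm) _ _
    rw [Psi_pair hjk, Psi_pair hjk, h5, h6]
    simp

-- ### the function c_j * (1 - 2 η_j) as an explicit coefficient sum
lemma rate_mul_expand {m : ℕ} (R : Fin m → Finset (Fin m) → ℝ) (j : Fin m)
    (η : Fin m → Bool) :
    rateFromCoeff R j η * (1 - 2 * occ (η j))
      = ∑ A : Finset (Fin m),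
          (if j ∈ A then -(R j A) - 2 * R j (A.erase j) else R j A) * Psi A η := by
  unfold rateFromCoeff
  rw [Finset.sum_mul]
  rw [← Finset.sum_filter_add_sum_filter_not Finset.univ (fun A => j ∈ A)
      (fun A => R j A * Psi A η * (1 - 2 * occ (η j)))]
  rw [← Finset.sum_filter_add_sum_filter_not Finset.univ (fun A => j ∈ A)
      (fun A => (if j ∈ A then -(R j A) - 2 * R j (A.erase j) else R j A) * Psi A η)]
  have hmem : ∀ A ∈ Finset.univ.filter (fun A : Finset (Fin m) => j ∈ A),
      R j A * Psi A η * (1 - 2 * occ (η j)) = -(R j A) * Psi A η := by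
    intro A hA
    rw [Finset.mem_filter] at hA
    rw [Psi_erase_of_mem hA.2 η]
    have h := occ_mul_one_sub_two (η j)
    linear_combination R j A * Psi (A.erase j) η * h
  have hnotmem : ∀ A ∈ Finset.univ.filter (fun A : Finset (Fin m) => j ∉ A),
      R j A * Psi A η * (1 - 2 * occ (η j))
        = R j A * Psi A η - 2 * R j A * Psi (insert j A) η := by
    intro A hA
    rw [Finset.mem_filter] at hA
    rw [Psi_insert hA.2 η]
    ring
  rw [Finset.sum_congr rfl hmem, Finset.sum_congr rfl hnotmem]
  rw [Finset.sum_sub_distrib]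
  have hreindex :
      ∑ A ∈ Finset.univ.filter (fun A : Finset (Fin m) => j ∉ A),
          2 * R j A * Psi (insert j A) η
      = ∑ A ∈ Finset.univ.filter (fun A : Finset (Fin m) => j ∈ A),
          2 * R j (A.erase j) * Psi A η := by
    refine Finset.sum_nbij' (fun A => insert j A) (fun A => A.erase j) ?_ ?_ ?_ ?_ ?_
    · intro A hA
      rw [Finset.mem_filter] at hA ⊢
      exact ⟨Finset.mem_univ _, Finset.mem_insert_self _ _⟩
    · intro A hA
      rw [Finset.mem_filter] at hA ⊢
      exact ⟨Finset.mem_univ _, Finset.notMem_erase _ _⟩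
    · intro A hA
      rw [Finset.mem_filter] at hA
      exact Finset.erase_insert hA.2
    · intro A hA
      rw [Finset.mem_filter] at hA
      exact Finset.insert_erase hA.2
    · intro A hA
      rw [Finset.mem_filter] at hA
      rw [Finset.erase_insert hA.2]
  rw [hreindex]
  have e1 : ∑ A ∈ Finset.univ.filter (fun A : Finset (Fin m) => j ∈ A),
      (if j ∈ A then -(R j A) - 2 * R j (A.erase j) else R j A) * Psi A η
      = ∑ A ∈ Finset.univ.filter (fun A : Finset (Fin m) => j ∈ A),
          (-(R j A) * Psi A η - 2 * R j (A.erase j) * Psi A η) := by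
    apply Finset.sum_congr rfl
    intro A hA
    rw [Finset.mem_filter] at hA
    rw [if_pos hA.2]; ring
  have e2 : ∑ A ∈ Finset.univ.filter (fun A : Finset (Fin m) => j ∉ A),
      (if j ∈ A then -(R j A) - 2 * R j (A.erase j) else R j A) * Psi A η
      = ∑ A ∈ Finset.univ.filter (fun A : Finset (Fin m) => j ∉ A), R j A * Psi A η := by
    apply Finset.sum_congr rfl
    intro A hA
    rw [Finset.mem_filter] at hA
    rw [if_neg hA.2]
  rw [e1, e2, Finset.sum_sub_distrib]
  ring

-- ### multiplying a polynomial by an occupation variable raises order by ≤ 1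
lemma isPoly_mul_occ {m n : ℕ} {f : (Fin m → Bool) → ℝ} (hf : IsPolyOfOrder n f)
    (k : Fin m) : IsPolyOfOrder (n + 1) (fun η => f η * occ (η k)) := by
  unfold IsPolyOfOrder at hf ⊢
  induction hf using Submodule.span_induction with
  | mem g hg =>
    obtain ⟨A, hA, rfl⟩ := hg
    apply Submodule.subset_span
    refine ⟨insert k A, ?_, ?_⟩
    · exact le_trans (Finset.card_insert_le _ _) (by omega)
    · funext η
      rw [Psi_mul_occ]
  | zero =>
    have : (fun η : Fin m → Bool => (0 : (Fin m → Bool) → ℝ) η * occ (η k))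
        = (0 : (Fin m → Bool) → ℝ) := by
      funext η; simp
    rw [this]; exact Submodule.zero_mem _
  | add x y hx hy ihx ihy =>
    have : (fun η => (x + y) η * occ (η k))
        = (fun η => x η * occ (η k)) + (fun η => y η * occ (η k)) := by
      funext η; simp [add_mul]
    rw [this]; exact Submodule.add_mem _ ihx ihy
  | smul a x hx ihx =>
    have : (fun η => (a • x) η * occ (η k)) = a • (fun η => x η * occ (η k)) := by
      funext η; simp [mul_assoc]
    rw [this]; exact Submodule.smul_mem _ _ ihx

-- ### coefficient formula for L_G Psi_{j}
lemma glauber_single_coeff {m : ℕ} (R : Fin m → Finset (Fin m) → ℝ) (j : Fin m)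
    (A : Finset (Fin m)) :
    coeffAt A (glauberGen (rateFromCoeff R) (Psi {j}))
      = if j ∈ A then -(R j A) - 2 * R j (A.erase j) else R j A := by
  rw [glauber_single]
  have heq : (fun η => rateFromCoeff R j η * (1 - 2 * occ (η j)))
      = fun η => ∑ C : Finset (Fin m),
          (if j ∈ C then -(R j C) - 2 * R j (C.erase j) else R j C) * Psi C η :=
    funext (rate_mul_expand R j)
  rw [heq, coeffAt_sum_delta]

-- ### the ⇐ direction for singletons
lemma formula_poly1 {m : ℕ} (R : Fin m → Finset (Fin m) → ℝ) (j : Fin m)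
    (h : ∀ η, rateFromCoeff R j η
        = R j ∅ + R j {j} * occ (η j)
          + ∑ k ∈ Finset.univ.erase j, R j {k} * occ (η k) * (1 - 2 * occ (η j))) :
    IsPolyOfOrder 1 (glauberGen (rateFromCoeff R) (Psi {j})) := by
  rw [glauber_single]
  have heq : (fun η => rateFromCoeff R j η * (1 - 2 * occ (η j)))
      = (R j ∅) • Psi (∅ : Finset (Fin m)) + (-(2 * R j ∅) - R j {j}) • Psi {j}
        + ∑ k ∈ Finset.univ.erase j, (R j {k}) • Psi {k} := by
    funext η
    simp only [Pi.add_apply, Pi.smul_apply, Finset.sum_apply, smul_eq_mul, Psi_empty,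
      Psi_singleton, mul_one]
    rw [h η, add_mul, add_mul, Finset.sum_mul]
    have hs : ∀ k ∈ Finset.univ.erase j,
        (R j {k} * occ (η k) * (1 - 2 * occ (η j))) * (1 - 2 * occ (η j))
          = R j {k} * occ (η k) := by
      intro k _
      linear_combination (R j {k} * occ (η k)) * one_sub_two_occ_sq (η j)
    rw [Finset.sum_congr rfl hs]
    linear_combination (R j {j}) * occ_mul_one_sub_two (η j)
  rw [heq]
  unfold IsPolyOfOrder
  refine Submodule.add_mem _ (Submodule.add_mem _ ?_ ?_) ?_
  · exact Submodule.smul_mem _ _ (Submodule.subset_span ⟨∅, by simp, rfl⟩)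
  · exact Submodule.smul_mem _ _ (Submodule.subset_span ⟨{j}, by simp, rfl⟩)
  · exact Submodule.sum_mem _ fun k _ =>
      Submodule.smul_mem _ _ (Submodule.subset_span ⟨{k}, by simp, rfl⟩)

-- ### the ⇒ direction: constraints on R imply the formula
lemma constraints_imply_formula {m : ℕ} (R : Fin m → Finset (Fin m) → ℝ) (j : Fin m)
    (hR0 : ∀ A : Finset (Fin m), 2 ≤ A.card → j ∉ A → R j A = 0)
    (hR1 : ∀ A : Finset (Fin m), 2 ≤ A.card → j ∈ A → R j A = -2 * R j (A.erase j))
    (η : Fin m → Bool) :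
    rateFromCoeff R j η
      = R j ∅ + R j {j} * occ (η j)
        + ∑ k ∈ Finset.univ.erase j, R j {k} * occ (η k) * (1 - 2 * occ (η j)) := by
  have hR2 : ∀ A : Finset (Fin m), 3 ≤ A.card → j ∈ A → R j A = 0 := by
    intro A hA hj
    rw [hR1 A (by omega) hj, hR0 (A.erase j)
      (by rw [Finset.card_erase_of_mem hj]; omega) (Finset.notMem_erase _ _)]
    ring
  set S1 : Finset (Finset (Fin m)) := Finset.univ.image (fun k : Fin m => ({k} : Finset (Fin m))) with hS1
  set S2 : Finset (Finset (Fin m)) :=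
    (Finset.univ.erase j).image (fun k : Fin m => ({j, k} : Finset (Fin m))) with hS2
  set T : Finset (Finset (Fin m)) := insert ∅ (S1 ∪ S2) with hT
  have hTuniv : T ⊆ Finset.univ := Finset.subset_univ _
  have hzero : ∀ A ∈ Finset.univ, A ∉ T → R j A * Psi A η = 0 := by
    intro A _ hAT
    have hRA : R j A = 0 := by
      by_cases hc0 : A.card = 0
      · exact absurd (hT ▸ Finset.mem_insert_self _ _ : (∅ : Finset (Fin m)) ∈ T)
          (by rwa [Finset.card_eq_zero.1 hc0] at hAT)
      by_cases hc1 : A.card = 1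
      · obtain ⟨k, rfl⟩ := Finset.card_eq_one.1 hc1
        exact absurd (by
          rw [hT]
          exact Finset.mem_insert_of_mem (Finset.mem_union_left _
            (Finset.mem_image.2 ⟨k, Finset.mem_univ _, rfl⟩))) hAT
      have hc2 : 2 ≤ A.card := by omega
      by_cases hj : j ∈ A
      · by_cases hc3 : A.card = 2
        · exfalso
          have hce : (A.erase j).card = 1 := by
            rw [Finset.card_erase_of_mem hj, hc3]
          obtain ⟨k, hk⟩ := Finset.card_eq_one.1 hce
          have hkj : k ≠ j := by
            intro hkj
            exact Finset.notMem_erase j A (by rw [hk, hkj]; exact Finset.mem_singleton_self j)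
          have hA : A = {j, k} := by
            rw [← Finset.insert_erase hj, hk]
          apply hAT
          rw [hT, hA]
          exact Finset.mem_insert_of_mem (Finset.mem_union_right _
            (Finset.mem_image.2 ⟨k, Finset.mem_erase.2 ⟨hkj, Finset.mem_univ _⟩, rfl⟩))
        · exact hR2 A (by omega) hj
      · exact hR0 A hc2 hj
    rw [hRA, zero_mul]
  have hsum : rateFromCoeff R j η = ∑ A ∈ T, R j A * Psi A η := by
    unfold rateFromCoeff
    exact (Finset.sum_subset hTuniv hzero).symm
  rw [hsum]
  have hemp : (∅ : Finset (Fin m)) ∉ S1 ∪ S2 := by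
    rw [Finset.mem_union]
    rintro (h | h) <;> rw [Finset.mem_image] at h <;> obtain ⟨k, _, hk⟩ := h
    · exact Finset.singleton_ne_empty k hk
    · exact Finset.insert_ne_empty _ _ hk
  have hdisj : Disjoint S1 S2 := by
    rw [Finset.disjoint_left]
    rintro A hA1 hA2
    rw [Finset.mem_image] at hA1 hA2
    obtain ⟨k, _, rfl⟩ := hA1
    obtain ⟨l, hl, hlk⟩ := hA2
    rw [Finset.mem_erase] at hl
    have hcard : ({j, l} : Finset (Fin m)).card = 2 := by
      rw [Finset.card_insert_of_notMem (by simp [Ne.symm hl.1]), Finset.card_singleton]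
    rw [hlk] at hcard
    simp at hcard
  rw [hT, Finset.sum_insert hemp, Finset.sum_union hdisj]
  have hs1 : ∑ A ∈ S1, R j A * Psi A η = ∑ k : Fin m, R j {k} * occ (η k) := by
    rw [hS1, Finset.sum_image (fun a _ b _ h => Finset.singleton_injective h)]
    exact Finset.sum_congr rfl fun k _ => by rw [Psi_singleton]
  have hs2 : ∑ A ∈ S2, R j A * Psi A η
      = ∑ k ∈ Finset.univ.erase j, (-2 * R j {k}) * (occ (η j) * occ (η k)) := by
    rw [hS2, Finset.sum_image]
    · apply Finset.sum_congr rfl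
      intro k hk
      rw [Finset.mem_erase] at hk
      have hkj : k ≠ j := hk.1
      have hcard : ({j, k} : Finset (Fin m)).card = 2 := by
        rw [Finset.card_insert_of_notMem (by simp [Ne.symm hkj]), Finset.card_singleton]
      have herase : ({j, k} : Finset (Fin m)).erase j = {k} := by
        rw [show ({j, k} : Finset (Fin m)) = insert j {k} from rfl,
          Finset.erase_insert (by simp only [Finset.mem_singleton]; exact Ne.symm hkj)]
      rw [hR1 {j, k} (by omega) (Finset.mem_insert_self _ _), herase,
        Psi_pair (Ne.symm hkj)]
    · intro a ha b hb h
      rw [Finset.mem_coe, Finset.mem_erase] at ha hb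
      have : b ∈ ({j, a} : Finset (Fin m)) := by
        rw [show ({j, a} : Finset (Fin m)) = {j, b} from h]; exact Finset.mem_insert_of_mem (Finset.mem_singleton_self b)
      rcases Finset.mem_insert.1 this with h' | h'
      · exact absurd h' hb.1
      · exact (Finset.mem_singleton.1 h').symm
  rw [hs1, hs2, Psi_empty]
  rw [← Finset.add_sum_erase Finset.univ (fun k => R j {k} * occ (η k)) (Finset.mem_univ j)]
  rw [add_assoc, ← Finset.sum_add_distrib]
  have : ∀ k ∈ Finset.univ.erase j,
      R j {k} * occ (η k) + (-2 * R j {k}) * (occ (η j) * occ (η k))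
        = R j {k} * occ (η k) * (1 - 2 * occ (η j)) := by
    intro k _; ring
  rw [Finset.sum_congr rfl this]
  ring

/-- `L_G Ψ_{{j}}` has order `1` and `L_G Ψ_{{j,k}}` has order `2`
(for all `j ≠ k`) iff
`c_j(η) = R_{j,∅} + R_{j,{j}} η_j + Σ_{k ≠ j} R_{j,{k}} η_k (1 − 2η_j)`. -/
theorem stmt0 (p : ℕ) (R : Fin (p+1) → Finset (Fin (p+1)) → ℝ) :
    ((∀ j : Fin (p+1),
        IsPolyOfOrder 1 (glauberGen (rateFromCoeff R) (Psi {j}))) ∧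
     (∀ j k : Fin (p+1), j ≠ k →
        IsPolyOfOrder 2 (glauberGen (rateFromCoeff R) (Psi {j, k})))) ↔
    (∀ (j : Fin (p+1)) (η : Fin (p+1) → Bool),
      rateFromCoeff R j η
        = R j ∅ + R j {j} * occ (η j)
          + ∑ k ∈ Finset.univ.erase j, R j {k} * occ (η k) * (1 - 2 * occ (η j))) := by
  constructor
  · rintro ⟨h1, -⟩ j η
    have hcoef : ∀ A : Finset (Fin (p+1)), 2 ≤ A.card →
        (if j ∈ A then -(R j A) - 2 * R j (A.erase j) else R j A) = 0 := by
      intro A hA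
      rw [← glauber_single_coeff]
      exact coeffAt_eq_zero_of_poly (h1 j) (by omega)
    have hR0 : ∀ A : Finset (Fin (p+1)), 2 ≤ A.card → j ∉ A → R j A = 0 := by
      intro A hA hj
      have := hcoef A hA
      rwa [if_neg hj] at this
    have hR1 : ∀ A : Finset (Fin (p+1)), 2 ≤ A.card → j ∈ A →
        R j A = -2 * R j (A.erase j) := by
      intro A hA hj
      have := hcoef A hA
      rw [if_pos hj] at this
      linarith
    exact constraints_imply_formula R j hR0 hR1 η
  · intro h
    refine ⟨fun j => formula_poly1 R j (h j), fun j k hjk => ?_⟩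
    rw [glauber_pair _ hjk]
    have hj := isPoly_mul_occ (formula_poly1 R j (h j)) k
    have hk := isPoly_mul_occ (formula_poly1 R k (h k)) j
    have heq : (fun η => glauberGen (rateFromCoeff R) (Psi {j}) η * occ (η k)
          + glauberGen (rateFromCoeff R) (Psi {k}) η * occ (η j))
        = (fun η => glauberGen (rateFromCoeff R) (Psi {j}) η * occ (η k))
          + (fun η => glauberGen (rateFromCoeff R) (Psi {k}) η * occ (η j)) := rfl
    rw [heq]
    exact Submodule.add_mem _ hj hk
end

section
/- Fix j ∈ Λ*_p and real coefficients R_{j,∅}, R_{j,{k}} (k ∈ Λ*_p), and let c_j(η) = R_{j,∅} + R_{j,{j}} η_j + Σ_{k≠j} R_{j,{k}} η_k (1 − 2η_j). Then c_j(η) ≥ 0 for every η ∈ Ω*_p if and only if both p_j := R_{j,∅} + R_{j,{j}} − Σ_{k∈ℙ_j} R_{j,{k}} ≥ 0 and q_j := R_{j,∅} + Σ_{k∈ℕ_j} R_{j,{k}} ≥ 0. -/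
open Finset

lemma occ_nonneg (b : Bool) : 0 ≤ occ b := by cases b <;> simp [occ]

lemma occ_le_one (b : Bool) : occ b ≤ 1 := by cases b <;> simp [occ]

/-- the rate
`c_j(η) = R_{j,∅} + R_{j,{j}} η_j + Σ_{k ≠ j} R_{j,{k}} η_k (1 − 2η_j)`
is non-negative iff `p_j ≥ 0` and `q_j ≥ 0`.  Sites of `Λ*_p = {-p, …, 0}` are
indexed by `Fin (p+1)` (index `i` ↔ site `i - p`); `R1 k` stands for `R_{j,{k}}`. -/
theorem stmt1 (p : ℕ) (j : Fin (p+1)) (R0 : ℝ) (R1 : Fin (p+1) → ℝ)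
    (c : (Fin (p+1) → Bool) → ℝ)
    (hc : ∀ η : Fin (p+1) → Bool,
      c η = R0 + R1 j * occ (η j)
        + ∑ k ∈ Finset.univ.erase j, R1 k * occ (η k) * (1 - 2 * occ (η j))) :
    (∀ η, 0 ≤ c η) ↔
      (0 ≤ R0 + R1 j - ∑ k ∈ (Finset.univ.erase j).filter (fun k => 0 ≤ R1 k), R1 k
        ∧ 0 ≤ R0 + ∑ k ∈ (Finset.univ.erase j).filter (fun k => R1 k < 0), R1 k) := by
  constructor
  · intro h
    constructor
    · have h1 := h (fun k => decide (k = j ∨ 0 ≤ R1 k))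
      rw [hc] at h1
      have e : ∑ k ∈ Finset.univ.erase j,
          R1 k * occ (decide (k = j ∨ 0 ≤ R1 k)) * (1 - 2 * occ (decide (j = j ∨ 0 ≤ R1 j)))
          = -∑ k ∈ (Finset.univ.erase j).filter (fun k => 0 ≤ R1 k), R1 k := by
        rw [Finset.sum_filter, ← Finset.sum_neg_distrib]
        apply Finset.sum_congr rfl
        intro k hk
        have hkj : k ≠ j := (Finset.mem_erase.1 hk).1
        by_cases hR : 0 ≤ R1 k <;> simp [occ, hkj, hR] <;> ring
      rw [e] at h1
      simp [occ] at h1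
      linarith
    · have h2 := h (fun k => decide (k ≠ j ∧ R1 k < 0))
      rw [hc] at h2
      have e : ∑ k ∈ Finset.univ.erase j,
          R1 k * occ (decide (k ≠ j ∧ R1 k < 0)) * (1 - 2 * occ (decide (j ≠ j ∧ R1 j < 0)))
          = ∑ k ∈ (Finset.univ.erase j).filter (fun k => R1 k < 0), R1 k := by
        rw [Finset.sum_filter]
        apply Finset.sum_congr rfl
        intro k hk
        have hkj : k ≠ j := (Finset.mem_erase.1 hk).1
        by_cases hR : R1 k < 0 <;> simp [occ, hkj, hR]
      rw [e] at h2
      simp [occ] at h2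
      linarith
  · rintro ⟨hp, hq⟩ η
    rw [hc]
    by_cases hj : η j = true
    · have hoj : occ (η j) = 1 := by simp [occ, hj]
      have key : ∑ k ∈ Finset.univ.erase j, R1 k * occ (η k)
          ≤ ∑ k ∈ (Finset.univ.erase j).filter (fun k => 0 ≤ R1 k), R1 k := by
        rw [Finset.sum_filter]
        apply Finset.sum_le_sum
        intro k _
        by_cases hR : 0 ≤ R1 k
        · simp only [hR, if_true]
          nlinarith [occ_le_one (η k), occ_nonneg (η k)]
        · simp only [hR, if_false]
          nlinarith [occ_le_one (η k), occ_nonneg (η k), not_le.1 hR]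
      have e : ∑ k ∈ Finset.univ.erase j, R1 k * occ (η k) * (1 - 2 * occ (η j))
          = -∑ k ∈ Finset.univ.erase j, R1 k * occ (η k) := by
        rw [← Finset.sum_neg_distrib]
        apply Finset.sum_congr rfl
        intro k _
        rw [hoj]; ring
      rw [e, hoj]
      linarith
    · have hj' : η j = false := by simpa using hj
      have hoj : occ (η j) = 0 := by simp [occ, hj']
      have key : ∑ k ∈ (Finset.univ.erase j).filter (fun k => R1 k < 0), R1 k
          ≤ ∑ k ∈ Finset.univ.erase j, R1 k * occ (η k) := by
        rw [Finset.sum_filter]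
        apply Finset.sum_le_sum
        intro k _
        by_cases hR : R1 k < 0
        · simp only [hR, if_true]
          nlinarith [occ_le_one (η k), occ_nonneg (η k)]
        · simp only [hR, if_false]
          nlinarith [occ_nonneg (η k), not_lt.1 hR]
      have e : ∑ k ∈ Finset.univ.erase j, R1 k * occ (η k) * (1 - 2 * occ (η j))
          = ∑ k ∈ Finset.univ.erase j, R1 k * occ (η k) := by
        apply Finset.sum_congr rfl
        intro k _
        rw [hoj]; ring
      rw [e, hoj]
      linarith
end

section
/- Fix j ∈ Λ*_p and suppose c_j(η) = R_{j,∅} + R_{j,{j}} η_j + Σ_{k≠j} R_{j,{k}} η_k (1 − 2η_j) satisfies c_j(η) ≥ 0 for all η ∈ Ω*_p. Then there exist a non-negative rate r_j ≥ 0, a density α_j ∈ [0,1], and non-negative rates c_{j,k} ≥ 0, a_{j,k} ≥ 0 (k ∈ Λ*_p, c_{j,j} = a_{j,j} = 0) such that for every η ∈ Ω*_p: c_j(η) = r_j [α_j(1−η_j) + (1−α_j)η_j] + Σ_{k∈Λ*_p} c_{j,k} [η_j(1−η_k) + η_k(1−η_j)] + Σ_{k∈Λ*_p} a_{j,k} [η_j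 η_k + (1−η_j)(1−η_k)]. -/
open Finset

lemma perk (s x y : ℝ) :
    max s 0 * (y * (1 - x) + x * (1 - y)) + max (-s) 0 * (y * x + (1 - y) * (1 - x))
      = s * x * (1 - 2 * y) + max s 0 * y + max (-s) 0 * (1 - y) := by
  rcases le_total 0 s with h | h
  · rw [max_eq_left h, max_eq_right (neg_nonpos.mpr h)]; ring
  · rw [max_eq_right h, max_eq_left (neg_nonneg.mpr h)]; ring

/-- a non-negative rate of the form
`c_j(η) = R_{j,∅} + R_{j,{j}} η_j + Σ_{k ≠ j} R_{j,{k}} η_k (1 − 2η_j)`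
can be decomposed into reservoir, copying and anti-copying parts.
Sites of `Λ*_p = {-p, …, 0}` are indexed by `Fin (p+1)` (index `i` ↔ site `i - p`). -/
theorem stmt2 (p : ℕ) (j : Fin (p+1)) (R0 : ℝ) (R1 : Fin (p+1) → ℝ)
    (c : (Fin (p+1) → Bool) → ℝ)
    (hc : ∀ η : Fin (p+1) → Bool,
      c η = R0 + R1 j * occ (η j)
        + ∑ k ∈ Finset.univ.erase j, R1 k * occ (η k) * (1 - 2 * occ (η j)))
    (hpos : ∀ η, 0 ≤ c η) :
    ∃ (r αj : ℝ) (cc aa : Fin (p+1) → ℝ),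
      0 ≤ r ∧ 0 ≤ αj ∧ αj ≤ 1 ∧ (∀ k, 0 ≤ cc k) ∧ (∀ k, 0 ≤ aa k) ∧
      cc j = 0 ∧ aa j = 0 ∧
      ∀ η : Fin (p+1) → Bool,
        c η = r * (αj * (1 - occ (η j)) + (1 - αj) * occ (η j))
          + (∑ k : Fin (p+1),
              cc k * (occ (η j) * (1 - occ (η k)) + occ (η k) * (1 - occ (η j))))
          + ∑ k : Fin (p+1),
              aa k * (occ (η j) * occ (η k) + (1 - occ (η j)) * (1 - occ (η k))) := by
  classical
  set E := Finset.univ.erase j with hE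
  set Sp := ∑ k ∈ E, max (R1 k) 0 with hSp
  set Sm := ∑ k ∈ E, max (-R1 k) 0 with hSm
  set A := R0 - Sm with hA
  set B := R0 + R1 j - Sp with hB
  have hA0 : 0 ≤ A := by
    have h := hpos (fun k => decide (k ≠ j ∧ R1 k < 0))
    rw [hc] at h
    simp only [occ, decide_eq_true_eq] at h
    have hj : (if j ≠ j ∧ R1 j < 0 then (1:ℝ) else 0) = 0 := by simp
    rw [hj] at h
    have hsum : ∑ k ∈ E, R1 k * (if k ≠ j ∧ R1 k < 0 then (1:ℝ) else 0) * (1 - 2 * 0)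
        = -Sm := by
      rw [hSm, ← Finset.sum_neg_distrib]
      refine Finset.sum_congr rfl fun k hk => ?_
      have hkj : k ≠ j := Finset.ne_of_mem_erase hk
      rcases lt_or_ge (R1 k) 0 with h' | h'
      · rw [if_pos ⟨hkj, h'⟩, max_eq_left (by linarith)]; ring
      · rw [if_neg (fun hcond => absurd hcond.2 (not_lt.mpr h')),
            max_eq_right (by linarith)]; ring
    rw [hsum] at h
    rw [hA]; linarith
  have hB0 : 0 ≤ B := by
    have h := hpos (fun k => decide (k = j ∨ 0 < R1 k))
    rw [hc] at h
    simp only [occ, decide_eq_true_eq, eq_self_iff_true, true_or, if_true] at h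
    have hsum : ∑ k ∈ E, R1 k * (if k = j ∨ 0 < R1 k then (1:ℝ) else 0) * (1 - 2 * 1)
        = -Sp := by
      rw [hSp, ← Finset.sum_neg_distrib]
      refine Finset.sum_congr rfl fun k hk => ?_
      have hkj : k ≠ j := Finset.ne_of_mem_erase hk
      rcases lt_or_ge 0 (R1 k) with h' | h'
      · rw [if_pos (Or.inr h'), max_eq_left (by linarith)]; ring
      · rw [if_neg (fun hcond => hcond.elim hkj fun hlt => absurd hlt (not_lt.mpr h')),
            max_eq_right (by linarith)]; ring
    rw [hsum] at h
    rw [hB]; linarith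
  set r := A + B with hr
  set α : ℝ := if A + B = 0 then 0 else A / (A + B) with hα
  have hrA : r * α = A := by
    by_cases h : A + B = 0
    · rw [hα, if_pos h, mul_zero]; linarith
    · rw [hα, if_neg h, hr]; field_simp
  have hrB : r * (1 - α) = B := by
    by_cases h : A + B = 0
    · have hA' : A = 0 := by linarith
      rw [hα, if_pos h, hr, hA']; ring_nf
    · rw [hα, if_neg h, hr]; field_simp; ring
  refine ⟨r, α, fun k => if k = j then 0 else max (R1 k) 0,
    fun k => if k = j then 0 else max (-R1 k) 0,
    by rw [hr]; linarith, ?_, ?_, ?_, ?_, by simp, by simp, ?_⟩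
  · rw [hα]; split_ifs with h
    · exact le_rfl
    · exact div_nonneg hA0 (by linarith)
  · rw [hα]; split_ifs with h
    · norm_num
    · rw [div_le_one (lt_of_le_of_ne (by linarith) (Ne.symm h))]; linarith
  · intro k; dsimp only; split_ifs <;> simp [le_max_right]
  · intro k; dsimp only; split_ifs <;> simp [le_max_right]
  · intro η
    rw [hc η, hE]
    set x := occ (η j) with hx
    clear_value E Sp Sm A B r α x
    -- split the two univ sums at j
    rw [← Finset.sum_erase_add _ _ (Finset.mem_univ j),
        ← Finset.sum_erase_add _ _ (Finset.mem_univ j)]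
    simp only [eq_self_iff_true, if_true, if_pos rfl, zero_mul, add_zero]
    have h1 : ∑ k ∈ Finset.univ.erase j,
        (if k = j then 0 else max (R1 k) 0) * (x * (1 - occ (η k)) + occ (η k) * (1 - x))
        = ∑ k ∈ Finset.univ.erase j,
          (max (R1 k) 0) * (x * (1 - occ (η k)) + occ (η k) * (1 - x)) := by
      refine Finset.sum_congr rfl fun k hk => ?_
      rw [if_neg (Finset.ne_of_mem_erase hk)]
    have h2 : ∑ k ∈ Finset.univ.erase j,
        (if k = j then 0 else max (-R1 k) 0) * (x * occ (η k) + (1 - x) * (1 - occ (η k)))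
        = ∑ k ∈ Finset.univ.erase j,
          (max (-R1 k) 0) * (x * occ (η k) + (1 - x) * (1 - occ (η k))) := by
      refine Finset.sum_congr rfl fun k hk => ?_
      rw [if_neg (Finset.ne_of_mem_erase hk)]
    rw [h1, h2]
    have key : ∑ k ∈ Finset.univ.erase j,
          (max (R1 k) 0) * (x * (1 - occ (η k)) + occ (η k) * (1 - x))
        + ∑ k ∈ Finset.univ.erase j,
          (max (-R1 k) 0) * (x * occ (η k) + (1 - x) * (1 - occ (η k)))
        = (∑ k ∈ Finset.univ.erase j, R1 k * occ (η k) * (1 - 2 * x))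
          + Sp * x + Sm * (1 - x) := by
      rw [← Finset.sum_add_distrib, hSp, hSm, hE, Finset.sum_mul, Finset.sum_mul,
        ← Finset.sum_add_distrib, ← Finset.sum_add_distrib]
      exact Finset.sum_congr rfl fun k _ => perk (R1 k) (occ (η k)) x
    have hgoal : r * (α * (1 - x) + (1 - α) * x) = A * (1 - x) + B * x := by
      have : r * (α * (1 - x) + (1 - α) * x) = (r * α) * (1 - x) + (r * (1 - α)) * x := by ring
      rw [this, hrA, hrB]
    rw [hA, hB] at hgoal
    linear_combination -hgoal - key
end

section
/- If Σ_{j∈Λ*_p} r_j + Σ_{j,k∈Λ*_p} a_{j,k} > 0, then the continuous-time Markov chain on Ω*_p with generator L_l = L_S + L_R + L_C + L_A has a unique stationary state. -/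
open Finset

/-- Exchange the occupation variables at sites `i` and `j`. -/
def swapCfg {m : ℕ} (η : Fin m → Bool) (i j : Fin m) : Fin m → Bool :=
  fun k => η (Equiv.swap i j k)

/-- A stationary state of a generator `L` on a finite set `S`. -/
def IsStationaryState {S : Type*} [Fintype S] (L : (S → ℝ) → S → ℝ) (μ : S → ℝ) : Prop :=
  (∀ x, 0 ≤ μ x) ∧ (∑ x, μ x = 1) ∧ ∀ f : S → ℝ, ∑ x, μ x * L f x = 0

/- The sites of `Λ*_p = {-p, …, 0}` are indexed by `Fin (p+1)`, the index `i`
corresponding to the site `i - p`. -/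

/-- Stirring dynamics on `Λ*_p`: exchanges at the pairs `(j, j+1)`, `-p ≤ j ≤ -1`. -/
def LS (p : ℕ) (f : (Fin (p+1) → Bool) → ℝ) (η : Fin (p+1) → Bool) : ℝ :=
  ∑ i : Fin p, (f (swapCfg η i.castSucc i.succ) - f η)

/-- Reservoir dynamics. -/
def LR (p : ℕ) (r α : Fin (p+1) → ℝ)
    (f : (Fin (p+1) → Bool) → ℝ) (η : Fin (p+1) → Bool) : ℝ :=
  ∑ j : Fin (p+1),
    r j * (α j * (1 - occ (η j)) + occ (η j) * (1 - α j)) * (f (flipCfg η j) - f η)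

/-- Copying dynamics. -/
def LC (p : ℕ) (cR : Fin (p+1) → Fin (p+1) → ℝ)
    (f : (Fin (p+1) → Bool) → ℝ) (η : Fin (p+1) → Bool) : ℝ :=
  ∑ j : Fin (p+1), ∑ k : Fin (p+1),
    cR j k * (occ (η k) * (1 - occ (η j)) + occ (η j) * (1 - occ (η k))) *
      (f (flipCfg η j) - f η)

/-- Anti-copying dynamics. -/
def LA (p : ℕ) (aR : Fin (p+1) → Fin (p+1) → ℝ)
    (f : (Fin (p+1) → Bool) → ℝ) (η : Fin (p+1) → Bool) : ℝ :=
  ∑ j : Fin (p+1), ∑ k : Fin (p+1),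
    aR j k * (occ (η j) * occ (η k) + (1 - occ (η j)) * (1 - occ (η k))) *
      (f (flipCfg η j) - f η)


set_option linter.unusedSectionVars false
set_option linter.unreachableTactic false
set_option linter.unusedTactic false
set_option linter.unnecessarySimpa false
set_option maxHeartbeats 1000000

namespace Stmt3Aux

open Finset Matrix

section Abstract
variable {S : Type*} [Fintype S] [DecidableEq S] [Nonempty S]

lemma abs_fixed (P : S → S → ℝ) (hP : ∀ x y, 0 ≤ P x y) (hrow : ∀ x, ∑ y, P x y = 1)
    (h : S → ℝ) (hfix : ∀ y, ∑ x, h x * P x y = h y) :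
    ∀ y, ∑ x, |h x| * P x y = |h y| := by
  have hle : ∀ y, |h y| ≤ ∑ x, |h x| * P x y := by
    intro y
    calc |h y| = |∑ x, h x * P x y| := by rw [hfix y]
    _ ≤ ∑ x, |h x * P x y| := Finset.abs_sum_le_sum_abs _ _
    _ = ∑ x, |h x| * P x y := by
        refine Finset.sum_congr rfl fun x _ => ?_
        rw [abs_mul, abs_of_nonneg (hP x y)]
  have hsum : ∑ y, ((∑ x, |h x| * P x y) - |h y|) = 0 := by
    rw [Finset.sum_sub_distrib, Finset.sum_comm]
    simp_rw [← Finset.mul_sum, hrow, mul_one]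
    rw [sub_self]
  have h2 := (Finset.sum_eq_zero_iff_of_nonneg (fun y _ => sub_nonneg.2 (hle y))).1 hsum
  intro y
  have := h2 y (Finset.mem_univ y)
  linarith

lemma support_closed (Q : S → S → ℝ) (hoff : ∀ x y, x ≠ y → 0 ≤ Q x y)
    (ν : S → ℝ) (hν : ∀ x, 0 ≤ ν x) (hst : ∀ y, ∑ x, ν x * Q x y = 0)
    {x y : S} (hx : 0 < ν x) (hQ : 0 < Q x y) (hxy : x ≠ y) : 0 < ν y := by
  rcases lt_or_eq_of_le (hν y) with hy | hy
  · exact hy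
  exfalso
  have hsplit : ∑ z, ν z * Q z y = ν y * Q y y + ∑ z ∈ Finset.univ.erase y, ν z * Q z y := by
    rw [← Finset.add_sum_erase _ _ (Finset.mem_univ y)]
  have hpos : 0 < ∑ z ∈ Finset.univ.erase y, ν z * Q z y := by
    refine Finset.sum_pos' (fun z hz => ?_) ⟨x, Finset.mem_erase.2 ⟨hxy, Finset.mem_univ x⟩, ?_⟩
    · exact mul_nonneg (hν z) (hoff z y (Finset.mem_erase.1 hz).1)
    · exact mul_pos hx hQ
  have := hst y
  rw [hsplit, ← hy] at this
  simp at this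
  linarith

lemma reach_support (Q : S → S → ℝ) (hoff : ∀ x y, x ≠ y → 0 ≤ Q x y)
    (ν : S → ℝ) (hν : ∀ x, 0 ≤ ν x) (hst : ∀ y, ∑ x, ν x * Q x y = 0)
    {a b : S} (hab : Relation.ReflTransGen (fun a b => 0 < Q a b ∧ a ≠ b) a b)
    (ha : 0 < ν a) : 0 < ν b := by
  induction hab with
  | refl => exact ha
  | tail _ hstep ih => exact support_closed Q hoff ν hν hst ih hstep.1 hstep.2

theorem abstract_unique (Q : S → S → ℝ)
    (hoff : ∀ x y, x ≠ y → 0 ≤ Q x y)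
    (hrow : ∀ x, ∑ y, Q x y = 0)
    (z : S) (hreach : ∀ x, Relation.ReflTransGen (fun a b => 0 < Q a b ∧ a ≠ b) x z) :
    ∃! μ : S → ℝ, (∀ x, 0 ≤ μ x) ∧ (∑ x, μ x = 1) ∧ ∀ y, ∑ x, μ x * Q x y = 0 := by
  set T : ℝ := ∑ x, ∑ y, |Q x y| with hT
  have hT0 : 0 ≤ T := Finset.sum_nonneg fun x _ => Finset.sum_nonneg fun y _ => abs_nonneg _
  set ε : ℝ := (1 + T)⁻¹ with hε
  have hεpos : 0 < ε := inv_pos.2 (by linarith)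
  have hbd : ∀ x y, |Q x y| ≤ T := by
    intro x y
    calc |Q x y| ≤ ∑ y', |Q x y'| :=
          Finset.single_le_sum (f := fun y' => |Q x y'|) (fun y' _ => abs_nonneg _)
            (Finset.mem_univ y)
    _ ≤ T := Finset.single_le_sum (f := fun x' => ∑ y', |Q x' y'|)
        (fun x' _ => Finset.sum_nonneg fun y' _ => abs_nonneg _) (Finset.mem_univ x)
  set P : S → S → ℝ := fun x y => (if x = y then 1 else 0) + ε * Q x y with hPdef
  have hP : ∀ x y, 0 ≤ P x y := by
    intro x y
    by_cases hxy : x = y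
    · subst hxy
      show 0 ≤ (if x = x then 1 else 0) + ε * Q x x
      rw [if_pos rfl]
      have h1 : ε * |Q x x| ≤ ε * (1 + T) := by
        refine mul_le_mul_of_nonneg_left ?_ hεpos.le
        have := hbd x x; linarith
      rw [hε, inv_mul_cancel₀ (by linarith : (1:ℝ) + T ≠ 0)] at h1
      rw [hε] at *
      nlinarith [neg_abs_le (Q x x), abs_nonneg (Q x x)]
    · show 0 ≤ (if x = y then 1 else 0) + ε * Q x y
      rw [if_neg hxy]
      have := hoff x y hxy
      positivity
  have hProw : ∀ x, ∑ y, P x y = 1 := by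
    intro x
    show ∑ y, ((if x = y then 1 else 0) + ε * Q x y) = 1
    rw [Finset.sum_add_distrib, ← Finset.mul_sum, hrow, mul_zero, add_zero,
      Finset.sum_ite_eq Finset.univ x (fun _ => (1:ℝ))]
    simp
  have hPQ : ∀ v : S → ℝ, ∀ y, ∑ x, v x * P x y = v y + ε * ∑ x, v x * Q x y := by
    intro v y
    show ∑ x, v x * ((if x = y then 1 else 0) + ε * Q x y) = _
    simp only [mul_add, Finset.sum_add_distrib]
    congr 1
    · rw [Finset.sum_congr rfl (fun x _ => by rw [mul_ite, mul_one, mul_zero]),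
        Finset.sum_ite_eq' Finset.univ y v]
      simp
    · rw [Finset.mul_sum]
      exact Finset.sum_congr rfl fun x _ => by ring
  -- from P-fixedness of v deduce Q-stationarity of |v|
  have key : ∀ v : S → ℝ, (∀ y, ∑ x, v x * Q x y = 0) → ∀ y, ∑ x, |v x| * Q x y = 0 := by
    intro v hv
    have hfix : ∀ y, ∑ x, v x * P x y = v y := by
      intro y; rw [hPQ v y, hv y, mul_zero, add_zero]
    have habs := abs_fixed P hP hProw v hfix
    intro y
    have h2 := habs y
    rw [hPQ (fun x => |v x|) y] at h2
    have h3 : ε * ∑ x, |v x| * Q x y = 0 := by linarith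
    exact (mul_eq_zero.1 h3).resolve_left hεpos.ne'
  -- existence
  obtain ⟨h, hne, hker⟩ : ∃ v ≠ 0, v ᵥ* (Matrix.of Q) = 0 := by
    rw [Matrix.exists_vecMul_eq_zero_iff, ← Matrix.exists_mulVec_eq_zero_iff]
    refine ⟨fun _ => 1, ?_, ?_⟩
    · intro hcontra
      have := congrFun hcontra (Classical.arbitrary S)
      simpa using this
    · funext x
      simp only [Matrix.mulVec, Matrix.of_apply, dotProduct, mul_one]
      exact hrow x
  have hkerQ : ∀ y, ∑ x, h x * Q x y = 0 := by
    intro y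
    have := congrFun hker y
    simpa [Matrix.vecMul, dotProduct] using this
  have habs : ∀ y, ∑ x, |h x| * Q x y = 0 := key h hkerQ
  have hs : 0 < ∑ x, |h x| := by
    rcases Function.ne_iff.1 hne with ⟨x, hx⟩
    refine Finset.sum_pos' (fun x _ => abs_nonneg _) ⟨x, Finset.mem_univ x, ?_⟩
    simpa [abs_pos] using hx
  set s : ℝ := ∑ x, |h x| with hsdef
  -- uniqueness claim
  have huniq : ∀ μ ν : S → ℝ,
      ((∀ x, 0 ≤ μ x) ∧ (∑ x, μ x = 1) ∧ ∀ y, ∑ x, μ x * Q x y = 0) →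
      ((∀ x, 0 ≤ ν x) ∧ (∑ x, ν x = 1) ∧ ∀ y, ∑ x, ν x * Q x y = 0) → μ = ν := by
    rintro μ ν ⟨hμ0, hμ1, hμQ⟩ ⟨hν0, hν1, hνQ⟩
    by_contra hne'
    obtain ⟨x0, hx0⟩ := Function.ne_iff.1 hne'
    obtain ⟨d, hd⟩ : ∃ d : S → ℝ, d = fun x => μ x - ν x := ⟨_, rfl⟩
    have hdQ : ∀ y, ∑ x, d x * Q x y = 0 := by
      intro y
      have heq : ∑ x, d x * Q x y = (∑ x, μ x * Q x y) - ∑ x, ν x * Q x y := by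
        rw [← Finset.sum_sub_distrib]
        refine Finset.sum_congr rfl fun x _ => ?_
        rw [hd]; ring
      rw [heq, hμQ y, hνQ y, sub_self]
    have hdabs := key d hdQ
    have hdsum : ∑ x, d x = 0 := by
      rw [hd, Finset.sum_sub_distrib, hμ1, hν1, sub_self]
    obtain ⟨dp, hdp⟩ : ∃ f : S → ℝ, f = fun x => (|d x| + d x) / 2 := ⟨_, rfl⟩
    obtain ⟨dm, hdm⟩ : ∃ f : S → ℝ, f = fun x => (|d x| - d x) / 2 := ⟨_, rfl⟩
    have hdp0 : ∀ x, 0 ≤ dp x := by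
      intro x; rw [hdp]; have := neg_abs_le (d x); dsimp only; linarith
    have hdm0 : ∀ x, 0 ≤ dm x := by
      intro x; rw [hdm]; have := le_abs_self (d x); dsimp only; linarith
    have hdpQ : ∀ y, ∑ x, dp x * Q x y = 0 := by
      intro y
      have heq : ∑ x, dp x * Q x y
          = (∑ x, |d x| * Q x y) / 2 + (∑ x, d x * Q x y) / 2 := by
        rw [Finset.sum_div, Finset.sum_div, ← Finset.sum_add_distrib]
        refine Finset.sum_congr rfl fun x _ => ?_
        rw [hdp]; dsimp only; ring
      rw [heq, hdabs y, hdQ y]; norm_num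
    have hdmQ : ∀ y, ∑ x, dm x * Q x y = 0 := by
      intro y
      have heq : ∑ x, dm x * Q x y
          = (∑ x, |d x| * Q x y) / 2 - (∑ x, d x * Q x y) / 2 := by
        rw [Finset.sum_div, Finset.sum_div, ← Finset.sum_sub_distrib]
        refine Finset.sum_congr rfl fun x _ => ?_
        rw [hdm]; dsimp only; ring
      rw [heq, hdabs y, hdQ y]; norm_num
    have hdx0 : d x0 ≠ 0 := by rw [hd]; exact sub_ne_zero.2 hx0
    have hdzero : (∀ x, d x ≤ 0) → ∀ x, d x = 0 := by
      intro hle x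
      have hzero := (Finset.sum_eq_zero_iff_of_nonneg
        (fun x _ => neg_nonneg.2 (hle x))).1
        (by rw [Finset.sum_neg_distrib, hdsum, neg_zero]) x (Finset.mem_univ x)
      linarith
    have hdzero' : (∀ x, 0 ≤ d x) → ∀ x, d x = 0 := fun hle x =>
      (Finset.sum_eq_zero_iff_of_nonneg (fun x _ => hle x)).1 hdsum x (Finset.mem_univ x)
    have hdpz : 0 < dp z := by
      have hsum_dp : 0 < ∑ x, dp x := by
        refine Finset.sum_pos' (fun x _ => hdp0 x) ?_
        by_contra hno
        push_neg at hno
        have hle : ∀ x, d x ≤ 0 := by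
          intro x
          have h1 := hno x (Finset.mem_univ x)
          have h2 := hdp0 x
          have h3 : dp x = 0 := le_antisymm h1 h2
          rw [hdp] at h3; dsimp only at h3
          have := le_abs_self (d x)
          have := neg_abs_le (d x)
          rcases abs_cases (d x) with ⟨ha1, ha2⟩ | ⟨ha1, ha2⟩ <;> linarith
        exact hdx0 (hdzero hle x0)
      obtain ⟨x1, _, hx1⟩ := Finset.exists_lt_of_sum_lt (by simpa using hsum_dp :
        ∑ _x : S, (0:ℝ) < ∑ x, dp x)
      exact reach_support Q hoff dp hdp0 hdpQ (hreach x1) hx1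
    have hdmz : 0 < dm z := by
      have hsum_dm : 0 < ∑ x, dm x := by
        refine Finset.sum_pos' (fun x _ => hdm0 x) ?_
        by_contra hno
        push_neg at hno
        have hle : ∀ x, 0 ≤ d x := by
          intro x
          have h1 := hno x (Finset.mem_univ x)
          have h2 := hdm0 x
          have h3 : dm x = 0 := le_antisymm h1 h2
          rw [hdm] at h3; dsimp only at h3
          rcases abs_cases (d x) with ⟨ha1, ha2⟩ | ⟨ha1, ha2⟩ <;> linarith
        exact hdx0 (hdzero' hle x0)
      obtain ⟨x1, _, hx1⟩ := Finset.exists_lt_of_sum_lt (by simpa using hsum_dm :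
        ∑ _x : S, (0:ℝ) < ∑ x, dm x)
      exact reach_support Q hoff dm hdm0 hdmQ (hreach x1) hx1
    have hprod : dp z * dm z = 0 := by
      rw [hdp, hdm]; dsimp only
      nlinarith [sq_abs (d z), abs_nonneg (d z)]
    nlinarith [hdpz, hdmz, hprod]
  refine ⟨fun x => |h x| / s, ⟨fun x => div_nonneg (abs_nonneg _) hs.le, ?_, ?_⟩, ?_⟩
  · rw [← Finset.sum_div, div_self hs.ne']
  · intro y
    simp_rw [div_mul_eq_mul_div, ← Finset.sum_div, habs y, zero_div]
  · intro ν hν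
    exact huniq ν (fun x => |h x| / s)
      hν ⟨fun x => div_nonneg (abs_nonneg _) hs.le,
        by rw [← Finset.sum_div, div_self hs.ne'],
        fun y => by simp_rw [div_mul_eq_mul_div, ← Finset.sum_div, habs y, zero_div]⟩

end Abstract

end Stmt3Aux

namespace Stmt3Aux

/-- The full generator. -/
def Lfull (p : ℕ) (r α : Fin (p+1) → ℝ) (cR aR : Fin (p+1) → Fin (p+1) → ℝ)
    (f : (Fin (p+1) → Bool) → ℝ) (η : Fin (p+1) → Bool) : ℝ :=
  LS p f η + LR p r α f η + LC p cR f η + LA p aR f η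

/-- The transition-rate matrix. -/
def Qm (p : ℕ) (r α : Fin (p+1) → ℝ) (cR aR : Fin (p+1) → Fin (p+1) → ℝ)
    (η ξ : Fin (p+1) → Bool) : ℝ :=
  Lfull p r α cR aR (fun z => if z = ξ then 1 else 0) η

lemma rep_helper {ι S : Type*} [Fintype ι] [Fintype S] [DecidableEq S]
    (c : ι → ℝ) (g : ι → S) (x : S) (f : S → ℝ) :
    ∑ ξ : S, (∑ i, c i * ((if g i = ξ then (1:ℝ) else 0) - (if x = ξ then 1 else 0))) * f ξ
      = ∑ i, c i * (f (g i) - f x) := by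
  simp only [Finset.sum_mul]
  rw [Finset.sum_comm]
  refine Finset.sum_congr rfl fun i _ => ?_
  have h1 : ∀ ξ : S, c i * ((if g i = ξ then (1:ℝ) else 0) - (if x = ξ then 1 else 0)) * f ξ
      = (c i * (if g i = ξ then f ξ else 0) - c i * (if x = ξ then f ξ else 0)) := by
    intro ξ
    by_cases hgi : g i = ξ <;> by_cases hx : x = ξ <;> simp [hgi, hx] <;> ring
  rw [Finset.sum_congr rfl fun ξ _ => h1 ξ, Finset.sum_sub_distrib,
    ← Finset.mul_sum, ← Finset.mul_sum, Finset.sum_ite_eq, Finset.sum_ite_eq]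
  simp [mul_sub]

lemma Lfull_rep (p : ℕ) (r α : Fin (p+1) → ℝ) (cR aR : Fin (p+1) → Fin (p+1) → ℝ)
    (f : (Fin (p+1) → Bool) → ℝ) (η : Fin (p+1) → Bool) :
    Lfull p r α cR aR f η = ∑ ξ, Qm p r α cR aR η ξ * f ξ := by
  have hS : ∑ ξ, LS p (fun z => if z = ξ then (1:ℝ) else 0) η * f ξ = LS p f η := by
    have := rep_helper (fun _ : Fin p => (1:ℝ))
      (fun i => swapCfg η i.castSucc i.succ) η f
    simp only [one_mul] at this
    exact this
  have hR : ∑ ξ, LR p r α (fun z => if z = ξ then (1:ℝ) else 0) η * f ξ = LR p r α f η := by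
    exact rep_helper (fun j => r j * (α j * (1 - occ (η j)) + occ (η j) * (1 - α j)))
      (fun j => flipCfg η j) η f
  have hC : ∑ ξ, LC p cR (fun z => if z = ξ then (1:ℝ) else 0) η * f ξ = LC p cR f η := by
    have h2 : ∀ g : (Fin (p+1) → Bool) → ℝ, LC p cR g η =
        ∑ jk : Fin (p+1) × Fin (p+1),
          cR jk.1 jk.2 * (occ (η jk.2) * (1 - occ (η jk.1)) + occ (η jk.1) * (1 - occ (η jk.2))) *
            (g (flipCfg η jk.1) - g η) := by
      intro g; rw [Fintype.sum_prod_type]; rfl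
    simp only [h2]
    exact rep_helper
      (fun jk : Fin (p+1) × Fin (p+1) =>
        cR jk.1 jk.2 * (occ (η jk.2) * (1 - occ (η jk.1)) + occ (η jk.1) * (1 - occ (η jk.2))))
      (fun jk => flipCfg η jk.1) η f
  have hA : ∑ ξ, LA p aR (fun z => if z = ξ then (1:ℝ) else 0) η * f ξ = LA p aR f η := by
    have h2 : ∀ g : (Fin (p+1) → Bool) → ℝ, LA p aR g η =
        ∑ jk : Fin (p+1) × Fin (p+1),
          aR jk.1 jk.2 * (occ (η jk.1) * occ (η jk.2) + (1 - occ (η jk.1)) * (1 - occ (η jk.2))) *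
            (g (flipCfg η jk.1) - g η) := by
      intro g; rw [Fintype.sum_prod_type]; rfl
    simp only [h2]
    exact rep_helper
      (fun jk : Fin (p+1) × Fin (p+1) =>
        aR jk.1 jk.2 * (occ (η jk.1) * occ (η jk.2) + (1 - occ (η jk.1)) * (1 - occ (η jk.2))))
      (fun jk => flipCfg η jk.1) η f
  calc Lfull p r α cR aR f η
      = (∑ ξ, LS p (fun z => if z = ξ then (1:ℝ) else 0) η * f ξ)
        + (∑ ξ, LR p r α (fun z => if z = ξ then (1:ℝ) else 0) η * f ξ)
        + (∑ ξ, LC p cR (fun z => if z = ξ then (1:ℝ) else 0) η * f ξ)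
        + (∑ ξ, LA p aR (fun z => if z = ξ then (1:ℝ) else 0) η * f ξ) := by
        rw [hS, hR, hC, hA]; rfl
  _ = ∑ ξ, Qm p r α cR aR η ξ * f ξ := by
      rw [← Finset.sum_add_distrib, ← Finset.sum_add_distrib, ← Finset.sum_add_distrib]
      refine Finset.sum_congr rfl fun ξ _ => ?_
      show _ = (LS p _ η + LR p r α _ η + LC p cR _ η + LA p aR _ η) * f ξ
      ring

section Props
variable (p : ℕ) (r α : Fin (p+1) → ℝ) (cR aR : Fin (p+1) → Fin (p+1) → ℝ)

variable {hyp : Prop}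

lemma coefR_nonneg (hr : ∀ j, 0 ≤ r j) (hα0 : ∀ j, 0 ≤ α j) (hα1 : ∀ j, α j ≤ 1) (η : Fin (p+1) → Bool) (j : Fin (p+1)) :
    0 ≤ r j * (α j * (1 - occ (η j)) + occ (η j) * (1 - α j)) := by
  cases hb : η j <;> simp [occ, hb]
  · exact mul_nonneg (hr j) (hα0 j)
  · exact mul_nonneg (hr j) (by simpa using sub_nonneg.2 (hα1 j))

lemma coefC_nonneg (hc : ∀ j k, 0 ≤ cR j k) (η : Fin (p+1) → Bool) (j k : Fin (p+1)) :
    0 ≤ cR j k * (occ (η k) * (1 - occ (η j)) + occ (η j) * (1 - occ (η k))) := by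
  cases hb : η j <;> cases hb' : η k <;> simp [occ, hb, hb'] <;> exact hc j k

lemma coefA_nonneg (ha : ∀ j k, 0 ≤ aR j k) (η : Fin (p+1) → Bool) (j k : Fin (p+1)) :
    0 ≤ aR j k * (occ (η j) * occ (η k) + (1 - occ (η j)) * (1 - occ (η k))) := by
  cases hb : η j <;> cases hb' : η k <;> simp [occ, hb, hb'] <;> exact ha j k

lemma ite_nonneg' (P : Prop) [Decidable P] : (0:ℝ) ≤ if P then 1 else 0 := by
  split <;> norm_num

lemma Qm_offdiag (hr : ∀ j, 0 ≤ r j) (hα0 : ∀ j, 0 ≤ α j) (hα1 : ∀ j, α j ≤ 1) (hc : ∀ j k, 0 ≤ cR j k) (ha : ∀ j k, 0 ≤ aR j k) (η ξ : Fin (p+1) → Bool) (hne : η ≠ ξ) :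
    0 ≤ Qm p r α cR aR η ξ := by
  unfold Qm Lfull LS LR LC LA
  simp only [if_neg hne, sub_zero]
  refine add_nonneg (add_nonneg (add_nonneg ?_ ?_) ?_) ?_
  · exact Finset.sum_nonneg fun i _ => ite_nonneg' _
  · exact Finset.sum_nonneg fun j _ =>
      mul_nonneg (coefR_nonneg p r α hr hα0 hα1 η j) (ite_nonneg' _)
  · exact Finset.sum_nonneg fun j _ => Finset.sum_nonneg fun k _ =>
      mul_nonneg (coefC_nonneg p cR hc η j k) (ite_nonneg' _)
  · exact Finset.sum_nonneg fun j _ => Finset.sum_nonneg fun k _ =>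
      mul_nonneg (coefA_nonneg p aR ha η j k) (ite_nonneg' _)

lemma Qm_row (η : Fin (p+1) → Bool) : ∑ ξ, Qm p r α cR aR η ξ = 0 := by
  have h := Lfull_rep p r α cR aR (fun _ => (1:ℝ)) η
  simp only [mul_one] at h
  rw [← h]
  unfold Lfull LS LR LC LA
  simp

lemma flipCfg_ne (η : Fin (p+1) → Bool) (j : Fin (p+1)) : flipCfg η j ≠ η := by
  intro h
  have := congrFun h j
  simp [flipCfg] at this

lemma step_swap (hr : ∀ j, 0 ≤ r j) (hα0 : ∀ j, 0 ≤ α j) (hα1 : ∀ j, α j ≤ 1) (hc : ∀ j k, 0 ≤ cR j k) (ha : ∀ j k, 0 ≤ aR j k) (η : Fin (p+1) → Bool) (i : Fin p)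
    (hne : swapCfg η i.castSucc i.succ ≠ η) :
    0 < Qm p r α cR aR η (swapCfg η i.castSucc i.succ) := by
  set ξ := swapCfg η i.castSucc i.succ with hξ
  show 0 < Qm p r α cR aR η ξ
  unfold Qm Lfull LS LR LC LA
  simp only [if_neg (Ne.symm hne : η ≠ ξ), sub_zero]
  refine add_pos_of_pos_of_nonneg (add_pos_of_pos_of_nonneg (add_pos_of_pos_of_nonneg ?_ ?_) ?_) ?_
  · refine Finset.sum_pos' (fun i' _ => ite_nonneg' _) ⟨i, Finset.mem_univ i, ?_⟩
    rw [if_pos rfl]; norm_num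
  · exact Finset.sum_nonneg fun j _ =>
      mul_nonneg (coefR_nonneg p r α hr hα0 hα1 η j) (ite_nonneg' _)
  · exact Finset.sum_nonneg fun j _ => Finset.sum_nonneg fun k _ =>
      mul_nonneg (coefC_nonneg p cR hc η j k) (ite_nonneg' _)
  · exact Finset.sum_nonneg fun j _ => Finset.sum_nonneg fun k _ =>
      mul_nonneg (coefA_nonneg p aR ha η j k) (ite_nonneg' _)

lemma step_flipR (hr : ∀ j, 0 ≤ r j) (hα0 : ∀ j, 0 ≤ α j) (hα1 : ∀ j, α j ≤ 1) (hc : ∀ j k, 0 ≤ cR j k) (ha : ∀ j k, 0 ≤ aR j k) (η : Fin (p+1) → Bool) (j : Fin (p+1))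
    (hrate : 0 < r j * (α j * (1 - occ (η j)) + occ (η j) * (1 - α j))) :
    0 < Qm p r α cR aR η (flipCfg η j) := by
  set ξ := flipCfg η j with hξ
  show 0 < Qm p r α cR aR η ξ
  unfold Qm Lfull LS LR LC LA
  simp only [if_neg (Ne.symm (flipCfg_ne p η j) : η ≠ ξ), sub_zero]
  refine add_pos_of_pos_of_nonneg (add_pos_of_pos_of_nonneg (add_pos_of_nonneg_of_pos ?_ ?_) ?_) ?_
  · exact Finset.sum_nonneg fun i _ => ite_nonneg' _
  · refine Finset.sum_pos' (fun j' _ =>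
      mul_nonneg (coefR_nonneg p r α hr hα0 hα1 η j') (ite_nonneg' _))
      ⟨j, Finset.mem_univ j, ?_⟩
    rw [if_pos rfl, mul_one]
    exact hrate
  · exact Finset.sum_nonneg fun j _ => Finset.sum_nonneg fun k _ =>
      mul_nonneg (coefC_nonneg p cR hc η j k) (ite_nonneg' _)
  · exact Finset.sum_nonneg fun j _ => Finset.sum_nonneg fun k _ =>
      mul_nonneg (coefA_nonneg p aR ha η j k) (ite_nonneg' _)

lemma step_flipA (hr : ∀ j, 0 ≤ r j) (hα0 : ∀ j, 0 ≤ α j) (hα1 : ∀ j, α j ≤ 1) (hc : ∀ j k, 0 ≤ cR j k) (ha : ∀ j k, 0 ≤ aR j k) (η : Fin (p+1) → Bool) (j k : Fin (p+1))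
    (heq : η j = η k) (hak : 0 < aR j k) :
    0 < Qm p r α cR aR η (flipCfg η j) := by
  set ξ := flipCfg η j with hξ
  show 0 < Qm p r α cR aR η ξ
  unfold Qm Lfull LS LR LC LA
  simp only [if_neg (Ne.symm (flipCfg_ne p η j) : η ≠ ξ), sub_zero]
  refine add_pos_of_nonneg_of_pos (add_nonneg (add_nonneg ?_ ?_) ?_) ?_
  · exact Finset.sum_nonneg fun i _ => ite_nonneg' _
  · exact Finset.sum_nonneg fun j' _ =>
      mul_nonneg (coefR_nonneg p r α hr hα0 hα1 η j') (ite_nonneg' _)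
  · exact Finset.sum_nonneg fun j _ => Finset.sum_nonneg fun k _ =>
      mul_nonneg (coefC_nonneg p cR hc η j k) (ite_nonneg' _)
  · refine Finset.sum_pos' (fun j' _ => Finset.sum_nonneg fun k' _ =>
      mul_nonneg (coefA_nonneg p aR ha η j' k') (ite_nonneg' _))
      ⟨j, Finset.mem_univ j, ?_⟩
    refine Finset.sum_pos' (fun k' _ =>
      mul_nonneg (coefA_nonneg p aR ha η j k') (ite_nonneg' _))
      ⟨k, Finset.mem_univ k, ?_⟩
    rw [if_pos rfl, mul_one]
    have hocc : occ (η j) * occ (η k) + (1 - occ (η j)) * (1 - occ (η k)) = 1 := by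
      rw [heq]; cases η k <;> simp [occ]
    rw [hocc, mul_one]
    exact hak

end Props

section Reach
variable (p : ℕ) (r α : Fin (p+1) → ℝ) (cR aR : Fin (p+1) → Fin (p+1) → ℝ)

/-- One-step relation of the chain. -/
def stp (a b : Fin (p+1) → Bool) : Prop := 0 < Qm p r α cR aR a b ∧ a ≠ b

/-- Reachability. -/
def Reach (a b : Fin (p+1) → Bool) : Prop := Relation.ReflTransGen (stp p r α cR aR) a b

lemma swapCfg_eq_self (η : Fin (p+1) → Bool) (i j : Fin (p+1)) (h : η i = η j) :
    swapCfg η i j = η := by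
  funext k
  simp only [swapCfg, Equiv.swap_apply_def]
  split_ifs with h1 h2
  · rw [h1, h]
  · rw [h2, h]
  · rfl

variable (hr : ∀ j, 0 ≤ r j) (hα0 : ∀ j, 0 ≤ α j) (hα1 : ∀ j, α j ≤ 1)
  (hc : ∀ j k, 0 ≤ cR j k) (ha : ∀ j k, 0 ≤ aR j k)

lemma reach_swap_adj (hr : ∀ j, 0 ≤ r j) (hα0 : ∀ j, 0 ≤ α j) (hα1 : ∀ j, α j ≤ 1)
    (hc : ∀ j k, 0 ≤ cR j k) (ha : ∀ j k, 0 ≤ aR j k)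
    (η : Fin (p+1) → Bool) (i : Fin p) :
    Reach p r α cR aR η (swapCfg η i.castSucc i.succ) := by
  by_cases h : swapCfg η i.castSucc i.succ = η
  · rw [h]; exact Relation.ReflTransGen.refl
  · exact Relation.ReflTransGen.single
      ⟨step_swap p r α cR aR hr hα0 hα1 hc ha η i h, Ne.symm h⟩

lemma swap_conj3 {β : Type*} [DecidableEq β] {a b c : β} (hab : a ≠ b) (hbc : b ≠ c)
    (hac : a ≠ c) (k : β) :
    Equiv.swap a b (Equiv.swap b c (Equiv.swap a b k)) = Equiv.swap a c k := by
  rcases eq_or_ne k a with rfl | hka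
  · rw [Equiv.swap_apply_left, Equiv.swap_apply_left,
      Equiv.swap_apply_of_ne_of_ne (Ne.symm hac) (Ne.symm hbc), Equiv.swap_apply_left]
  rcases eq_or_ne k b with rfl | hkb
  · rw [Equiv.swap_apply_right, Equiv.swap_apply_of_ne_of_ne hab hac,
      Equiv.swap_apply_left, Equiv.swap_apply_of_ne_of_ne hka hbc]
  rcases eq_or_ne k c with rfl | hkc
  · rw [Equiv.swap_apply_of_ne_of_ne (Ne.symm hac) (Ne.symm hbc),
      Equiv.swap_apply_right, Equiv.swap_apply_right, Equiv.swap_apply_right]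
  · rw [Equiv.swap_apply_of_ne_of_ne hka hkb, Equiv.swap_apply_of_ne_of_ne hkb hkc,
      Equiv.swap_apply_of_ne_of_ne hka hkb, Equiv.swap_apply_of_ne_of_ne hka hkc]

lemma reach_swap_aux (hr : ∀ j, 0 ≤ r j) (hα0 : ∀ j, 0 ≤ α j) (hα1 : ∀ j, α j ≤ 1)
    (hc : ∀ j k, 0 ≤ cR j k) (ha : ∀ j k, 0 ≤ aR j k) :
    ∀ (d : ℕ) (i j : Fin (p+1)), j.val = i.val + d →
      ∀ η, Reach p r α cR aR η (swapCfg η i j) := by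
  intro d
  induction d using Nat.strong_induction_on with
  | _ d ih =>
    intro i j hij η
    match d with
    | 0 =>
      have : i = j := Fin.ext (by omega)
      subst this
      rw [swapCfg_eq_self p η i i rfl]
      exact Relation.ReflTransGen.refl
    | 1 =>
      have hip : i.val < p := by have := j.isLt; omega
      have hi : (⟨i.val, hip⟩ : Fin p).castSucc = i := Fin.ext rfl
      have hj : (⟨i.val, hip⟩ : Fin p).succ = j := Fin.ext (by simp [Fin.succ]; omega)
      rw [← hi, ← hj]
      exact reach_swap_adj p r α cR aR hr hα0 hα1 hc ha η _
    | (d'' + 2) =>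
      have hmid : i.val + 1 < p + 1 := by have := j.isLt; omega
      set mid : Fin (p+1) := ⟨i.val + 1, hmid⟩ with hmiddef
      have h1 : Reach p r α cR aR η (swapCfg η i mid) :=
        ih 1 (by omega) i mid rfl η
      have h2 : Reach p r α cR aR (swapCfg η i mid)
          (swapCfg (swapCfg η i mid) mid j) :=
        ih (d'' + 1) (by omega) mid j (by simp [hmiddef]; omega) _
      have h3 : Reach p r α cR aR (swapCfg (swapCfg η i mid) mid j)
          (swapCfg (swapCfg (swapCfg η i mid) mid j) i mid) :=
        ih 1 (by omega) i mid rfl _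
      have hne1 : i ≠ mid := Fin.ne_of_val_ne (by simp [hmiddef])
      have hne2 : mid ≠ j := Fin.ne_of_val_ne (by simp [hmiddef]; omega)
      have hne3 : i ≠ j := Fin.ne_of_val_ne (by omega)
      have heq : swapCfg (swapCfg (swapCfg η i mid) mid j) i mid = swapCfg η i j := by
        funext l
        show η (Equiv.swap i mid (Equiv.swap mid j (Equiv.swap i mid l))) = η (Equiv.swap i j l)
        rw [swap_conj3 hne1 hne2 hne3 l]
      have := (h1.trans h2).trans h3
      rwa [heq] at this

lemma reach_swap (hr : ∀ j, 0 ≤ r j) (hα0 : ∀ j, 0 ≤ α j) (hα1 : ∀ j, α j ≤ 1)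
    (hc : ∀ j k, 0 ≤ cR j k) (ha : ∀ j k, 0 ≤ aR j k)
    (η : Fin (p+1) → Bool) (i j : Fin (p+1)) :
    Reach p r α cR aR η (swapCfg η i j) := by
  rcases le_or_gt i.val j.val with h | h
  · exact reach_swap_aux p r α cR aR hr hα0 hα1 hc ha (j.val - i.val) i j (by omega) η
  · have : swapCfg η i j = swapCfg η j i := by
      funext l; simp only [swapCfg, Equiv.swap_comm i j]
    rw [this]
    exact reach_swap_aux p r α cR aR hr hα0 hα1 hc ha (i.val - j.val) j i (by omega) η

end Reach

section Cnt
variable {m : ℕ}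

/-- Number of occupied sites. -/
def cnt (η : Fin m → Bool) : ℕ := (Finset.univ.filter fun i => η i = true).card

lemma cnt_swap (η : Fin m → Bool) (i j : Fin m) : cnt (swapCfg η i j) = cnt η := by
  unfold cnt
  apply Finset.card_bij (fun k _ => Equiv.swap i j k)
  · intro a hh
    simp only [Finset.mem_filter, Finset.mem_univ, true_and] at *
    exact hh
  · intro a _ b _ hab
    exact (Equiv.swap i j).injective hab
  · intro b hb
    refine ⟨Equiv.swap i j b, ?_, ?_⟩
    · simp only [Finset.mem_filter, Finset.mem_univ, true_and] at *
      show η (Equiv.swap i j (Equiv.swap i j b)) = true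
      rwa [Equiv.swap_apply_self]
    · rw [Equiv.swap_apply_self]

lemma cnt_flip_true (η : Fin m → Bool) (j : Fin m) (h : η j = true) :
    cnt (flipCfg η j) + 1 = cnt η := by
  unfold cnt
  have hset : (Finset.univ.filter fun i => flipCfg η j i = true)
      = (Finset.univ.filter fun i => η i = true).erase j := by
    ext k
    simp only [Finset.mem_filter, Finset.mem_univ, true_and, Finset.mem_erase]
    constructor
    · intro hk
      rcases eq_or_ne k j with rfl | hkj
      · simp [flipCfg, h] at hk
      · simp [flipCfg, Function.update_of_ne hkj] at hk
        exact ⟨hkj, hk⟩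
    · rintro ⟨hkj, hk⟩
      simpa [flipCfg, Function.update_of_ne hkj] using hk
  rw [hset]
  exact Finset.card_erase_add_one (by simp [h])

lemma cnt_flip_false (η : Fin m → Bool) (j : Fin m) (h : η j = false) :
    cnt (flipCfg η j) = cnt η + 1 := by
  unfold cnt
  have hset : (Finset.univ.filter fun i => flipCfg η j i = true)
      = insert j (Finset.univ.filter fun i => η i = true) := by
    ext k
    simp only [Finset.mem_filter, Finset.mem_univ, true_and, Finset.mem_insert]
    constructor
    · intro hk
      rcases eq_or_ne k j with rfl | hkj
      · exact Or.inl rfl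
      · simp [flipCfg, Function.update_of_ne hkj] at hk
        exact Or.inr hk
    · rintro (rfl | hk)
      · simp [flipCfg, h]
      · rcases eq_or_ne k j with rfl | hkj
        · rw [h] at hk; simp at hk
        · simpa [flipCfg, Function.update_of_ne hkj] using hk
  rw [hset, Finset.card_insert_of_notMem (by simp [h])]

lemma cnt_eq_zero (η : Fin m → Bool) (h : cnt η = 0) : η = fun _ => false := by
  funext i
  have := Finset.card_eq_zero.1 h
  have hmem := Finset.eq_empty_iff_forall_notMem.1 this i
  simp only [Finset.mem_filter, Finset.mem_univ, true_and] at hmem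
  exact Bool.not_eq_true _ ▸ (by simpa using hmem)

lemma cnt_pos_exists (η : Fin m → Bool) (h : 0 < cnt η) : ∃ i, η i = true := by
  obtain ⟨i, hi⟩ := Finset.card_pos.1 h
  simp only [Finset.mem_filter, Finset.mem_univ, true_and] at hi
  exact ⟨i, hi⟩

lemma cnt_one (η : Fin m → Bool) (h : cnt η = 1) : ∃ i, ∀ x, η x = true ↔ x = i := by
  obtain ⟨i, hi⟩ := Finset.card_eq_one.1 h
  refine ⟨i, fun x => ?_⟩
  constructor
  · intro hx
    have : x ∈ (Finset.univ.filter fun i => η i = true) := by simp [hx]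
    rw [hi] at this
    simpa using this
  · intro hx
    have h2 : x ∈ (Finset.univ.filter fun k => η k = true) := by
      rw [hi, Finset.mem_singleton]; exact hx
    simpa using h2

end Cnt

section Targets
variable (p : ℕ) (r α : Fin (p+1) → ℝ) (cR aR : Fin (p+1) → Fin (p+1) → ℝ)
variable (hr : ∀ j, 0 ≤ r j) (hα0 : ∀ j, 0 ≤ α j) (hα1 : ∀ j, α j ≤ 1)
  (hc : ∀ j k, 0 ≤ cR j k) (ha : ∀ j k, 0 ≤ aR j k)

lemma reachA (hr : ∀ j, 0 ≤ r j) (hα0 : ∀ j, 0 ≤ α j) (hα1 : ∀ j, α j ≤ 1)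
    (hc : ∀ j k, 0 ≤ cR j k) (ha : ∀ j k, 0 ≤ aR j k)
    (j : Fin (p+1)) (hrj : 0 < r j) (hαj : α j < 1) :
    ∀ n (η : Fin (p+1) → Bool), cnt η ≤ n → Reach p r α cR aR η (fun _ => false) := by
  intro n
  induction n with
  | zero =>
    intro η hn
    rw [cnt_eq_zero η (Nat.le_zero.1 hn)]
    exact Relation.ReflTransGen.refl
  | succ n ih =>
    intro η hn
    rcases Nat.eq_zero_or_pos (cnt η) with h0 | hpos
    · rw [cnt_eq_zero η h0]; exact Relation.ReflTransGen.refl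
    obtain ⟨i, hi⟩ := cnt_pos_exists η hpos
    have r1 : Reach p r α cR aR η (swapCfg η i j) :=
      reach_swap p r α cR aR hr hα0 hα1 hc ha η i j
    have hj1 : (swapCfg η i j) j = true := by
      show η (Equiv.swap i j j) = true
      rw [Equiv.swap_apply_right]; exact hi
    have hrate : 0 < r j * (α j * (1 - occ ((swapCfg η i j) j))
        + occ ((swapCfg η i j) j) * (1 - α j)) := by
      rw [hj1]
      simp only [occ, if_pos trivial, if_true]
      have h1 : α j * (1 - 1) + 1 * (1 - α j) = 1 - α j := by ring
      rw [h1]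
      exact mul_pos hrj (by linarith)
    have s2 : stp p r α cR aR (swapCfg η i j) (flipCfg (swapCfg η i j) j) :=
      ⟨step_flipR p r α cR aR hr hα0 hα1 hc ha _ j hrate,
       Ne.symm (flipCfg_ne p _ j)⟩
    have hcnt : cnt (flipCfg (swapCfg η i j) j) + 1 = cnt (swapCfg η i j) :=
      cnt_flip_true _ j hj1
    have hcnt2 : cnt (flipCfg (swapCfg η i j) j) ≤ n := by
      have := cnt_swap η i j; omega
    exact (r1.trans (Relation.ReflTransGen.single s2)).trans (ih _ hcnt2)

lemma not_flip (η : Fin (p+1) → Bool) (j : Fin (p+1)) :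
    (fun i => !(flipCfg η j i)) = flipCfg (fun i => !η i) j := by
  funext k
  rcases eq_or_ne k j with rfl | hkj
  · simp [flipCfg]
  · simp [flipCfg, Function.update_of_ne hkj]

lemma all_true_of (η : Fin (p+1) → Bool) (h : cnt (fun i => !η i) = 0) :
    η = fun _ => true := by
  have := cnt_eq_zero _ h
  funext i
  have := congrFun this i
  simpa using this

lemma reachB (hr : ∀ j, 0 ≤ r j) (hα0 : ∀ j, 0 ≤ α j) (hα1 : ∀ j, α j ≤ 1)
    (hc : ∀ j k, 0 ≤ cR j k) (ha : ∀ j k, 0 ≤ aR j k)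
    (j : Fin (p+1)) (hrj : 0 < r j) (hαj : 0 < α j) :
    ∀ n (η : Fin (p+1) → Bool), cnt (fun i => !η i) ≤ n →
      Reach p r α cR aR η (fun _ => true) := by
  intro n
  induction n with
  | zero =>
    intro η hn
    rw [all_true_of p η (Nat.le_zero.1 hn)]
    exact Relation.ReflTransGen.refl
  | succ n ih =>
    intro η hn
    rcases Nat.eq_zero_or_pos (cnt (fun i => !η i)) with h0 | hpos
    · rw [all_true_of p η h0]; exact Relation.ReflTransGen.refl
    obtain ⟨i, hi⟩ := cnt_pos_exists _ hpos
    have hif : η i = false := by simpa using hi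
    have r1 : Reach p r α cR aR η (swapCfg η i j) :=
      reach_swap p r α cR aR hr hα0 hα1 hc ha η i j
    have hj1 : (swapCfg η i j) j = false := by
      show η (Equiv.swap i j j) = false
      rw [Equiv.swap_apply_right]; exact hif
    have hrate : 0 < r j * (α j * (1 - occ ((swapCfg η i j) j))
        + occ ((swapCfg η i j) j) * (1 - α j)) := by
      rw [hj1]
      simp only [occ, Bool.false_eq_true, if_false]
      have h1 : α j * (1 - 0) + 0 * (1 - α j) = α j := by ring
      rw [h1]
      exact mul_pos hrj hαj
    have s2 : stp p r α cR aR (swapCfg η i j) (flipCfg (swapCfg η i j) j) :=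
      ⟨step_flipR p r α cR aR hr hα0 hα1 hc ha _ j hrate,
       Ne.symm (flipCfg_ne p _ j)⟩
    have hcnt : cnt (fun i' => !(flipCfg (swapCfg η i j) j i')) + 1
        = cnt (fun i' => !(swapCfg η i j i')) := by
      rw [not_flip]
      exact cnt_flip_true _ j (by simp [hj1])
    have hswapnot : cnt (fun i' => !(swapCfg η i j i')) = cnt (fun i' => !η i') :=
      cnt_swap (fun i' => !η i') i j
    have hcnt2 : cnt (fun i' => !(flipCfg (swapCfg η i j) j i')) ≤ n := by omega
    exact (r1.trans (Relation.ReflTransGen.single s2)).trans (ih _ hcnt2)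

lemma reachC_base (hr : ∀ j, 0 ≤ r j) (hα0 : ∀ j, 0 ≤ α j) (hα1 : ∀ j, α j ≤ 1)
    (hc : ∀ j k, 0 ≤ cR j k) (ha : ∀ j k, 0 ≤ aR j k)
    (j k : Fin (p+1)) (hjk : j ≠ k) (hak : 0 < aR j k)
    (η : Fin (p+1) → Bool) (h0 : cnt η = 0) :
    Reach p r α cR aR η (fun i => if i = j then true else false) := by
  rw [cnt_eq_zero η h0]
  have hstep : stp p r α cR aR (fun _ => false) (flipCfg (fun _ => false) j) :=
    ⟨step_flipA p r α cR aR hr hα0 hα1 hc ha _ j k rfl hak,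
     Ne.symm (flipCfg_ne p _ j)⟩
  have heq : flipCfg (fun _ : Fin (p+1) => false) j = fun i => if i = j then true else false := by
    funext l
    rcases eq_or_ne l j with rfl | hlj
    · simp [flipCfg]
    · simp [flipCfg, Function.update_of_ne hlj, hlj]
  rw [← heq]
  exact Relation.ReflTransGen.single hstep

lemma reachC (hr : ∀ j, 0 ≤ r j) (hα0 : ∀ j, 0 ≤ α j) (hα1 : ∀ j, α j ≤ 1)
    (hc : ∀ j k, 0 ≤ cR j k) (ha : ∀ j k, 0 ≤ aR j k)
    (j k : Fin (p+1)) (hjk : j ≠ k) (hak : 0 < aR j k) :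
    ∀ n (η : Fin (p+1) → Bool), cnt η ≤ n →
      Reach p r α cR aR η (fun i => if i = j then true else false) := by
  intro n
  induction n with
  | zero =>
    intro η hn
    exact reachC_base p r α cR aR hr hα0 hα1 hc ha j k hjk hak η (Nat.le_zero.1 hn)
  | succ n ih =>
    intro η hn
    rcases Nat.lt_or_ge (cnt η) 2 with hlt | hge
    · interval_cases h : (cnt η)
      · exact reachC_base p r α cR aR hr hα0 hα1 hc ha j k hjk hak η h
      · -- exactly one occupied site: just move it to j
        obtain ⟨i, hη⟩ := cnt_one η h
        have heq : swapCfg η i j = fun l => if l = j then true else false := by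
          funext l
          by_cases hl : l = j
          · subst hl
            show η (Equiv.swap i l l) = _
            rw [Equiv.swap_apply_right, if_pos rfl]
            exact (hη i).2 rfl
          · rw [if_neg hl]
            show η (Equiv.swap i j l) = false
            rcases Bool.eq_false_or_eq_true (η (Equiv.swap i j l)) with hb | hb
            · exfalso
              have h1 : Equiv.swap i j l = i := (hη _).1 hb
              have h2 : Equiv.swap i j j = i := Equiv.swap_apply_right i j
              exact hl ((Equiv.swap i j).injective (h1.trans h2.symm))
            · exact hb
        rw [← heq]
        exact reach_swap p r α cR aR hr hα0 hα1 hc ha η i j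
    · -- at least two occupied sites
      obtain ⟨i1, hi1⟩ := cnt_pos_exists η (by omega)
      have r1 : Reach p r α cR aR η (swapCfg η i1 j) :=
        reach_swap p r α cR aR hr hα0 hα1 hc ha η i1 j
      set η1 := swapCfg η i1 j with hη1def
      have hη1j : η1 j = true := by
        show η (Equiv.swap i1 j j) = true
        rw [Equiv.swap_apply_right]; exact hi1
      have hcnt1 : cnt η1 = cnt η := cnt_swap η i1 j
      -- find a second occupied site distinct from j
      have h2 : 2 ≤ cnt η1 := by omega
      have h2' : 2 ≤ (Finset.univ.filter fun i => η1 i = true).card := h2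
      have hne : ((Finset.univ.filter fun i => η1 i = true).erase j).Nonempty := by
        rw [← Finset.card_pos]
        by_cases hjmem : j ∈ (Finset.univ.filter fun i => η1 i = true)
        · rw [Finset.card_erase_of_mem hjmem]; omega
        · rw [Finset.erase_eq_of_notMem hjmem]; omega
      obtain ⟨i2, hi2mem⟩ := hne
      rw [Finset.mem_erase, Finset.mem_filter] at hi2mem
      obtain ⟨hi2j, _, hi2⟩ := hi2mem
      have r2 : Reach p r α cR aR η1 (swapCfg η1 i2 k) :=
        reach_swap p r α cR aR hr hα0 hα1 hc ha η1 i2 k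
      set η2 := swapCfg η1 i2 k with hη2def
      have hη2j : η2 j = true := by
        show η1 (Equiv.swap i2 k j) = true
        rw [Equiv.swap_apply_of_ne_of_ne (Ne.symm hi2j) hjk]
        exact hη1j
      have hη2k : η2 k = true := by
        show η1 (Equiv.swap i2 k k) = true
        rw [Equiv.swap_apply_right]; exact hi2
      have s3 : stp p r α cR aR η2 (flipCfg η2 j) :=
        ⟨step_flipA p r α cR aR hr hα0 hα1 hc ha η2 j k (hη2j.trans hη2k.symm) hak,
         Ne.symm (flipCfg_ne p _ j)⟩
      have hcnt2 : cnt η2 = cnt η := by rw [hη2def, cnt_swap, hcnt1]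
      have hcnt3 : cnt (flipCfg η2 j) + 1 = cnt η2 := cnt_flip_true _ j hη2j
      have hcnt4 : cnt (flipCfg η2 j) ≤ n := by omega
      exact ((r1.trans r2).trans (Relation.ReflTransGen.single s3)).trans (ih _ hcnt4)

end Targets

end Stmt3Aux

/-- if `Σ_j r_j + Σ_{j,k} a_{j,k} > 0`, the chain with generator
`L_l = L_S + L_R + L_C + L_A` has a unique stationary state. -/
theorem stmt3 (p : ℕ) (r α : Fin (p+1) → ℝ) (cR aR : Fin (p+1) → Fin (p+1) → ℝ)
    (hr : ∀ j, 0 ≤ r j) (hα0 : ∀ j, 0 ≤ α j) (hα1 : ∀ j, α j ≤ 1)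
    (hc : ∀ j k, 0 ≤ cR j k) (ha : ∀ j k, 0 ≤ aR j k)
    (hcd : ∀ j, cR j j = 0) (had : ∀ j, aR j j = 0)
    (hpos : 0 < (∑ j, r j) + ∑ j, ∑ k, aR j k) :
    ∃! μ : (Fin (p+1) → Bool) → ℝ,
      IsStationaryState (fun f η => LS p f η + LR p r α f η + LC p cR f η + LA p aR f η) μ := by
  classical
  have hoff : ∀ x y, x ≠ y → 0 ≤ Stmt3Aux.Qm p r α cR aR x y := fun x y hxy =>
    Stmt3Aux.Qm_offdiag p r α cR aR hr hα0 hα1 hc ha x y hxy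
  have hrow : ∀ x, ∑ y, Stmt3Aux.Qm p r α cR aR x y = 0 := Stmt3Aux.Qm_row p r α cR aR
  have hcase : (∃ j, 0 < r j) ∨ ∃ j k, 0 < aR j k := by
    by_contra hcon
    push_neg at hcon
    obtain ⟨h1, h2⟩ := hcon
    have hr0 : ∑ j, r j = 0 := Finset.sum_eq_zero fun j _ => le_antisymm (h1 j) (hr j)
    have ha0 : ∑ j, ∑ k, aR j k = 0 := Finset.sum_eq_zero fun j _ =>
      Finset.sum_eq_zero fun k _ => le_antisymm (h2 j k) (ha j k)
    rw [hr0, ha0] at hpos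
    norm_num at hpos
  obtain ⟨z, hreach⟩ : ∃ z, ∀ x, Relation.ReflTransGen
      (fun a b => 0 < Stmt3Aux.Qm p r α cR aR a b ∧ a ≠ b) x z := by
    rcases hcase with ⟨j, hj⟩ | ⟨j, k, hjk⟩
    · rcases lt_or_ge (α j) 1 with hαj | hαj
      · exact ⟨fun _ => false, fun x =>
          Stmt3Aux.reachA p r α cR aR hr hα0 hα1 hc ha j hj hαj (Stmt3Aux.cnt x) x le_rfl⟩
      · have hαjpos : 0 < α j := lt_of_lt_of_le zero_lt_one hαj
        exact ⟨fun _ => true, fun x =>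
          Stmt3Aux.reachB p r α cR aR hr hα0 hα1 hc ha j hj hαjpos
            (Stmt3Aux.cnt (fun i => !x i)) x le_rfl⟩
    · have hjk' : j ≠ k := by
        rintro rfl
        rw [had j] at hjk
        exact lt_irrefl 0 hjk
      exact ⟨fun i => if i = j then true else false, fun x =>
        Stmt3Aux.reachC p r α cR aR hr hα0 hα1 hc ha j k hjk' hjk (Stmt3Aux.cnt x) x le_rfl⟩
  obtain ⟨μ, hμ, huniq⟩ :=
    Stmt3Aux.abstract_unique (Stmt3Aux.Qm p r α cR aR) hoff hrow z hreach
  have hiff : ∀ ν : (Fin (p+1) → Bool) → ℝ,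
      IsStationaryState (fun f η => LS p f η + LR p r α f η + LC p cR f η + LA p aR f η) ν ↔
      ((∀ x, 0 ≤ ν x) ∧ (∑ x, ν x = 1) ∧
        ∀ y, ∑ x, ν x * Stmt3Aux.Qm p r α cR aR x y = 0) := by
    intro ν
    unfold IsStationaryState
    refine and_congr Iff.rfl (and_congr Iff.rfl ⟨?_, ?_⟩)
    · intro hf ξ
      exact hf (fun z => if z = ξ then 1 else 0)
    · intro hQ f
      show ∑ x, ν x * (LS p f x + LR p r α f x + LC p cR f x + LA p aR f x) = 0
      have hkey : ∑ x, ν x * (LS p f x + LR p r α f x + LC p cR f x + LA p aR f x)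
          = ∑ ξ, (∑ x, ν x * Stmt3Aux.Qm p r α cR aR x ξ) * f ξ := by
        rw [Finset.sum_congr rfl (fun x _ => by
          rw [show LS p f x + LR p r α f x + LC p cR f x + LA p aR f x
              = Stmt3Aux.Lfull p r α cR aR f x from rfl,
            Stmt3Aux.Lfull_rep, Finset.mul_sum])]
        rw [Finset.sum_comm]
        refine Finset.sum_congr rfl fun ξ _ => ?_
        rw [Finset.sum_mul]
        refine Finset.sum_congr rfl fun x _ => by ring
      rw [hkey]
      exact Finset.sum_eq_zero fun ξ _ => by rw [hQ ξ, zero_mul]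
  exact ⟨μ, (hiff μ).2 hμ, fun ν hν => huniq ν ((hiff ν).1 hν)⟩
end

section
/- If Σ_{j∈Λ*_p} r_j + Σ_{j,k∈Λ*_p} a_{j,k} = 0 and Σ_{j,k∈Λ*_p} c_{j,k} > 0, then a probability measure μ on Ω*_p is a stationary state of the generator L_l = L_S + L_R + L_C + L_A if and only if μ is supported on the two constant configurations (the configuration with all sites occupied and the configuration with all sites empty); in particular the extremal stationary states are exactly the two Dirac measures concentrated on these two configurations. -/
open Finset

/-- A stationary state of a generator `L` on a finite set `S`. -/
def IsStationaryL {S : Type*} [Fintype S] (L : (S → ℝ) → S → ℝ) (μ : S → ℝ) : Prop :=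
  (∀ x, 0 ≤ μ x) ∧ (∑ x, μ x = 1) ∧ ∀ f : S → ℝ, ∑ x, μ x * L f x = 0

namespace Stmt4Aux

open Relation

variable {p : ℕ}

/-! ### Basic lemmas on configurations -/

lemma swapCfg_left (η : Fin (p+1) → Bool) (a b : Fin (p+1)) : swapCfg η a b a = η b := by
  simp [swapCfg]

lemma swapCfg_right (η : Fin (p+1) → Bool) (a b : Fin (p+1)) : swapCfg η a b b = η a := by
  simp [swapCfg]

lemma swapCfg_other (η : Fin (p+1) → Bool) {a b x : Fin (p+1)} (h1 : x ≠ a) (h2 : x ≠ b) :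
    swapCfg η a b x = η x := by
  simp [swapCfg, Equiv.swap_apply_of_ne_of_ne h1 h2]

lemma swapCfg_apply (η : Fin (p+1) → Bool) (a b x : Fin (p+1)) :
    swapCfg η a b x = if x = a then η b else if x = b then η a else η x := by
  simp only [swapCfg, Equiv.swap_apply_def]
  split_ifs <;> rfl

lemma swapCfg_comm (η : Fin (p+1) → Bool) (a b : Fin (p+1)) :
    swapCfg η a b = swapCfg η b a := by
  funext x; simp [swapCfg, Equiv.swap_comm]

lemma swapCfg_const (b : Bool) (a c : Fin (p+1)) :
    swapCfg (fun _ => b) a c = (fun _ => b) := rfl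

lemma flipCfg_same (η : Fin (p+1) → Bool) (j : Fin (p+1)) : flipCfg η j j = !(η j) := by
  simp [flipCfg]

lemma flipCfg_other (η : Fin (p+1) → Bool) {j x : Fin (p+1)} (h : x ≠ j) :
    flipCfg η j x = η x := by
  simp [flipCfg, Function.update_of_ne h]

lemma flipCfg_ne (η : Fin (p+1) → Bool) (j : Fin (p+1)) : flipCfg η j ≠ η := by
  intro h
  have := congrFun h j
  rw [flipCfg_same] at this
  cases η j <;> simp_all

/-! ### Particle number -/

/-- number of occupied sites -/
def Ncount (η : Fin (p+1) → Bool) : ℕ := ∑ j, if η j then 1 else 0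

lemma Ncount_swap (η : Fin (p+1) → Bool) (a b : Fin (p+1)) :
    Ncount (swapCfg η a b) = Ncount η := by
  unfold Ncount
  exact Equiv.sum_comp (Equiv.swap a b) (fun x => if η x then (1:ℕ) else 0)

lemma Ncount_eq_zero {η : Fin (p+1) → Bool} (h : Ncount η = 0) : η = fun _ => false := by
  funext j
  have := (Finset.sum_eq_zero_iff.1 h) j (Finset.mem_univ j)
  by_contra hj
  simp only [Bool.not_eq_false] at hj
  simp [hj] at this

lemma Ncount_flip_true (η : Fin (p+1) → Bool) (j : Fin (p+1)) (h : η j = true) :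
    Ncount (flipCfg η j) + 1 = Ncount η := by
  unfold Ncount
  rw [← Finset.add_sum_erase _ _ (Finset.mem_univ j),
      ← Finset.add_sum_erase _ _ (Finset.mem_univ j)]
  have h2 : ∀ x ∈ Finset.univ.erase j,
      (if flipCfg η j x then (1:ℕ) else 0) = (if η x then 1 else 0) := by
    intro x hx
    rw [flipCfg_other η (Finset.mem_erase.1 hx).1]
  rw [Finset.sum_congr rfl h2, flipCfg_same, h]
  simp [Nat.add_comm, Nat.add_left_comm]

/-! ### Moves -/

/-- One elementary move of the dynamics: a (nontrivial) stirring exchange, or a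
copying flip at `j₀` driven by `k₀`. -/
def Step (j₀ k₀ : Fin (p+1)) (η ξ : Fin (p+1) → Bool) : Prop :=
  (∃ i : Fin p, ξ = swapCfg η i.castSucc i.succ ∧ ξ ≠ η) ∨
  (ξ = flipCfg η j₀ ∧ η j₀ ≠ η k₀)

lemma step_ne {j₀ k₀ : Fin (p+1)} {η ξ : Fin (p+1) → Bool} (h : Step j₀ k₀ η ξ) : ξ ≠ η := by
  rcases h with ⟨i, rfl, hne⟩ | ⟨rfl, _⟩
  · exact hne
  · exact flipCfg_ne η j₀

lemma step_adj (j₀ k₀ : Fin (p+1)) (η : Fin (p+1) → Bool) (a c : Fin (p+1))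
    (hc : (c:ℕ) = (a:ℕ) + 1) (hne : η a ≠ η c) :
    Step j₀ k₀ η (swapCfg η a c) := by
  left
  have hap : (a:ℕ) < p := by have := c.isLt; omega
  refine ⟨⟨a, hap⟩, ?_, ?_⟩
  · have e1 : (Fin.castSucc ⟨(a:ℕ), hap⟩) = a := by
      apply Fin.ext; simp
    have e2 : (Fin.succ ⟨(a:ℕ), hap⟩) = c := by
      apply Fin.ext; simp [hc]
    rw [e1, e2]
  · intro h
    have := congrFun h a
    rw [swapCfg_left] at this
    exact hne this.symm

lemma reach_swap (j₀ k₀ : Fin (p+1)) :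
    ∀ n (η : Fin (p+1) → Bool) (a b : Fin (p+1)),
      (a:ℕ) ≤ (b:ℕ) → (b:ℕ) - (a:ℕ) = n → η a ≠ η b →
      ReflTransGen (Step j₀ k₀) η (swapCfg η a b) := by
  intro n
  induction n with
  | zero =>
    intro η a b hab h0 hne
    have : a = b := Fin.ext (by omega)
    subst this
    exact absurd rfl hne
  | succ n ih =>
    intro η a b hab hsub hne
    have hba : (a:ℕ) + (n+1) = (b:ℕ) := by omega
    by_cases hn : n = 0
    · subst hn
      exact ReflTransGen.single (step_adj j₀ k₀ η a b (by omega) hne)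
    · have hcl : (a:ℕ) + 1 < p + 1 := by have := b.isLt; omega
      set c : Fin (p+1) := ⟨(a:ℕ)+1, hcl⟩ with hcdef
      have hcv : (c:ℕ) = (a:ℕ)+1 := rfl
      have hca : c ≠ a := by
        intro h; have h2 := congrArg Fin.val h; rw [hcv] at h2; omega
      have hcb : c ≠ b := by
        intro h; have h2 := congrArg Fin.val h; rw [hcv] at h2; omega
      have hane : a ≠ b := by intro h; have := congrArg Fin.val h; omega
      by_cases hval : η c = η a
      · -- first move the value from c to b, then do the adjacent exchange (a,c)
        have hcbne : η c ≠ η b := by rw [hval]; exact hne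
        have path1 := ih η c b (by rw [hcv]; omega) (by rw [hcv]; omega) hcbne
        have hstepne : swapCfg η c b a ≠ swapCfg η c b c := by
          rw [swapCfg_other η (Ne.symm hca) hane, swapCfg_left η c b]
          exact hne
        have hstep : Step j₀ k₀ (swapCfg η c b) (swapCfg (swapCfg η c b) a c) :=
          step_adj j₀ k₀ _ a c hcv hstepne
        have heq : swapCfg (swapCfg η c b) a c = swapCfg η a b := by
          funext x
          by_cases hxa : x = a
          · rw [hxa, swapCfg_left (swapCfg η c b) a c, swapCfg_left η a b, swapCfg_left η c b]
          · by_cases hxc : x = c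
            · rw [hxc, swapCfg_right (swapCfg η c b) a c, swapCfg_other η (Ne.symm hca) hane,
                swapCfg_other η hca hcb, hval]
            · by_cases hxb : x = b
              · rw [hxb, swapCfg_other (swapCfg η c b) (Ne.symm hane) (Ne.symm hcb),
                  swapCfg_right η c b, swapCfg_right η a b, hval]
              · rw [swapCfg_other (swapCfg η c b) hxa hxc, swapCfg_other η hxc hxb,
                  swapCfg_other η hxa hxb]
        rw [heq] at hstep
        exact path1.tail hstep
      · -- adjacent exchange (a,c) first, then move the value from c to b
        have hacne : η a ≠ η c := fun h => hval h.symm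
        have hstep : Step j₀ k₀ η (swapCfg η a c) := step_adj j₀ k₀ η a c hcv hacne
        have hvb : η c = η b := by
          revert hval hne; cases η a <;> cases η b <;> cases η c <;> simp
        have hz : swapCfg η a c c ≠ swapCfg η a c b := by
          rw [swapCfg_right η a c, swapCfg_other η (Ne.symm hane) (Ne.symm hcb)]
          exact hne
        have path2 := ih (swapCfg η a c) c b (by rw [hcv]; omega) (by rw [hcv]; omega) hz
        have heq : swapCfg (swapCfg η a c) c b = swapCfg η a b := by
          funext x
          by_cases hxa : x = a
          · rw [hxa, swapCfg_other (swapCfg η a c) (Ne.symm hca) hane, swapCfg_left η a c,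
              swapCfg_left η a b, hvb]
          · by_cases hxc : x = c
            · rw [hxc, swapCfg_left (swapCfg η a c) c b, swapCfg_other η (Ne.symm hane) (Ne.symm hcb),
                swapCfg_other η hca hcb, hvb]
            · by_cases hxb : x = b
              · rw [hxb, swapCfg_right (swapCfg η a c) c b, swapCfg_right η a c, swapCfg_right η a b]
              · rw [swapCfg_other (swapCfg η a c) hxc hxb, swapCfg_other η hxa hxc,
                  swapCfg_other η hxa hxb]
        rw [heq] at path2
        exact ReflTransGen.head hstep path2

lemma reach_swap_any (j₀ k₀ : Fin (p+1)) (η : Fin (p+1) → Bool) (a b : Fin (p+1))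
    (hne : η a ≠ η b) :
    ReflTransGen (Step j₀ k₀) η (swapCfg η a b) := by
  rcases le_total (a:ℕ) (b:ℕ) with h | h
  · exact reach_swap j₀ k₀ _ η a b h rfl hne
  · rw [swapCfg_comm]
    exact reach_swap j₀ k₀ _ η b a h rfl hne.symm

lemma reach_const (j₀ k₀ : Fin (p+1)) (hjk : j₀ ≠ k₀) :
    ∀ n (η : Fin (p+1) → Bool), Ncount η ≤ n →
      ReflTransGen (Step j₀ k₀) η (fun _ => true) ∨
      ReflTransGen (Step j₀ k₀) η (fun _ => false) := by
  intro n
  induction n with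
  | zero =>
    intro η hN
    right
    rw [Ncount_eq_zero (Nat.le_zero.1 hN)]
  | succ n ih =>
    intro η hN
    by_cases hT : ∀ j, η j = true
    · left
      have : η = fun _ => true := funext hT
      rw [this]
    · by_cases hF : ∀ j, η j = false
      · right
        have : η = fun _ => false := funext hF
        rw [this]
      · push_neg at hT hF
        obtain ⟨b0, hb0⟩ := hT
        obtain ⟨a0, ha0⟩ := hF
        have hb0 : η b0 = false := by simpa using hb0
        have ha0 : η a0 = true := by simpa using ha0
        -- stage 1: put a `true` at j₀
        obtain ⟨ζ₁, hreach1, hζ₁j, b₁, hb₁⟩ :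
            ∃ ζ₁, ReflTransGen (Step j₀ k₀) η ζ₁ ∧ ζ₁ j₀ = true ∧
              ∃ b₁, ζ₁ b₁ = false ∧ Ncount ζ₁ = Ncount η := by
          by_cases hj : η j₀ = true
          · exact ⟨η, ReflTransGen.refl, hj, b0, hb0, rfl⟩
          · rw [Bool.not_eq_true] at hj
            have hne : η a0 ≠ η j₀ := by rw [ha0, hj]; simp
            refine ⟨swapCfg η a0 j₀, reach_swap_any j₀ k₀ η a0 j₀ hne, ?_, ?_⟩
            · rw [swapCfg_right, ha0]
            · refine ⟨Equiv.swap a0 j₀ b0, ?_, Ncount_swap η a0 j₀⟩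
              show η (Equiv.swap a0 j₀ (Equiv.swap a0 j₀ b0)) = false
              rw [Equiv.swap_apply_self]
              exact hb0
        obtain ⟨hb₁f, hNζ₁⟩ := hb₁
        -- stage 2: put a `false` at k₀ while keeping `true` at j₀
        obtain ⟨ζ₂, hreach2, hζ₂j, hζ₂k, hNζ₂⟩ :
            ∃ ζ₂, ReflTransGen (Step j₀ k₀) ζ₁ ζ₂ ∧ ζ₂ j₀ = true ∧ ζ₂ k₀ = false ∧
              Ncount ζ₂ = Ncount ζ₁ := by
          by_cases hk : ζ₁ k₀ = false
          · exact ⟨ζ₁, ReflTransGen.refl, hζ₁j, hk, rfl⟩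
          · rw [Bool.not_eq_false] at hk
            have hb₁k : b₁ ≠ k₀ := by intro h; rw [h, hk] at hb₁f; cases hb₁f
            have hb₁j : b₁ ≠ j₀ := by intro h; rw [h, hζ₁j] at hb₁f; cases hb₁f
            have hne : ζ₁ b₁ ≠ ζ₁ k₀ := by rw [hb₁f, hk]; simp
            refine ⟨swapCfg ζ₁ b₁ k₀, reach_swap_any j₀ k₀ ζ₁ b₁ k₀ hne, ?_, ?_,
              Ncount_swap ζ₁ b₁ k₀⟩
            · rw [swapCfg_other ζ₁ (Ne.symm hb₁j) hjk]; exact hζ₁j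
            · rw [swapCfg_right]; exact hb₁f
        -- stage 3: flip at j₀
        have hflip : Step j₀ k₀ ζ₂ (flipCfg ζ₂ j₀) := by
          right
          exact ⟨rfl, by rw [hζ₂j, hζ₂k]; simp⟩
        have hNflip : Ncount (flipCfg ζ₂ j₀) + 1 = Ncount ζ₂ :=
          Ncount_flip_true ζ₂ j₀ hζ₂j
        have hN3 : Ncount (flipCfg ζ₂ j₀) ≤ n := by
          have h1 : (1:ℕ) ≤ Ncount ζ₂ := by omega
          omega
        rcases ih (flipCfg ζ₂ j₀) hN3 with h | h
        · left
          exact ((hreach1.trans hreach2).tail hflip).trans h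
        · right
          exact ((hreach1.trans hreach2).tail hflip).trans h

/-! ### Stationarity analysis -/

/-- exchange/copying rate factor -/
def wf (η : Fin (p+1) → Bool) (j k : Fin (p+1)) : ℝ :=
  occ (η k) * (1 - occ (η j)) + occ (η j) * (1 - occ (η k))

lemma wf_eq (η : Fin (p+1) → Bool) (j k : Fin (p+1)) :
    wf η j k = if η j = η k then 0 else 1 := by
  unfold wf occ; cases η j <;> cases η k <;> norm_num

lemma wf_nonneg (η : Fin (p+1) → Bool) (j k : Fin (p+1)) : 0 ≤ wf η j k := by
  rw [wf_eq]; split_ifs <;> norm_num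

/-- total rate out of a configuration -/
def Rout (cR : Fin (p+1) → Fin (p+1) → ℝ) (ξ : Fin (p+1) → Bool) : ℝ :=
  (∑ i : Fin p, if swapCfg ξ i.castSucc i.succ = ξ then 0 else 1) +
  ∑ j, ∑ k, cR j k * wf ξ j k

lemma Rout_const (cR : Fin (p+1) → Fin (p+1) → ℝ) (b : Bool) :
    Rout cR (fun _ => b) = 0 := by
  unfold Rout
  rw [Finset.sum_eq_zero, Finset.sum_eq_zero, add_zero]
  · intro j _
    rw [Finset.sum_eq_zero]
    intro k _
    rw [wf_eq]
    simp
  · intro i _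
    have h : swapCfg (fun _ => b : Fin (p+1) → Bool) i.castSucc i.succ = fun _ => b := rfl
    rw [if_pos h]

lemma ind_nonneg (P : Prop) [Decidable P] : (0:ℝ) ≤ if P then 1 else 0 := by
  split_ifs <;> norm_num

lemma G_decomp (cR : Fin (p+1) → Fin (p+1) → ℝ) (ξ η : Fin (p+1) → Bool) (hη : η ≠ ξ) :
    LS p (fun x => if x = ξ then (1:ℝ) else 0) η +
      LC p cR (fun x => if x = ξ then (1:ℝ) else 0) η =
    (∑ i : Fin p, if swapCfg η i.castSucc i.succ = ξ then (1:ℝ) else 0) +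
      ∑ j, ∑ k, cR j k * wf η j k * (if flipCfg η j = ξ then (1:ℝ) else 0) := by
  unfold LS LC
  congr 1
  · apply Finset.sum_congr rfl
    intro i _
    simp only [if_neg hη, sub_zero]
  · apply Finset.sum_congr rfl
    intro j _
    apply Finset.sum_congr rfl
    intro k _
    simp only [if_neg hη, sub_zero]
    rfl

lemma G_self (cR : Fin (p+1) → Fin (p+1) → ℝ) (ξ : Fin (p+1) → Bool) :
    LS p (fun x => if x = ξ then (1:ℝ) else 0) ξ +
      LC p cR (fun x => if x = ξ then (1:ℝ) else 0) ξ = -(Rout cR ξ) := by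
  unfold LS LC Rout
  rw [neg_add]
  congr 1
  · have h : ∀ i ∈ (Finset.univ : Finset (Fin p)),
        ((if swapCfg ξ i.castSucc i.succ = ξ then (1:ℝ) else 0) -
          (if ξ = ξ then (1:ℝ) else 0)) =
        -(if swapCfg ξ i.castSucc i.succ = ξ then (0:ℝ) else 1) := by
      intro i _
      rw [if_pos rfl]
      split_ifs with hh <;> norm_num
    rw [Finset.sum_congr rfl h, Finset.sum_neg_distrib]
  · have h : ∀ j ∈ (Finset.univ : Finset (Fin (p+1))),
        (∑ k, cR j k * wf ξ j k *
          ((if flipCfg ξ j = ξ then (1:ℝ) else 0) - (if ξ = ξ then (1:ℝ) else 0))) =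
        -(∑ k, cR j k * wf ξ j k) := by
      intro j _
      rw [← Finset.sum_neg_distrib]
      apply Finset.sum_congr rfl
      intro k _
      rw [if_pos rfl, if_neg (flipCfg_ne ξ j)]
      ring
    calc (∑ j, ∑ k, cR j k * wf ξ j k *
          ((if flipCfg ξ j = ξ then (1:ℝ) else 0) - (if ξ = ξ then (1:ℝ) else 0)))
        = ∑ j, -(∑ k, cR j k * wf ξ j k) := Finset.sum_congr rfl h
      _ = -(∑ j, ∑ k, cR j k * wf ξ j k) := Finset.sum_neg_distrib _

lemma propagate (cR : Fin (p+1) → Fin (p+1) → ℝ) (hc : ∀ j k, 0 ≤ cR j k)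
    (j₀ k₀ : Fin (p+1)) (hpos : 0 < cR j₀ k₀)
    (μ : (Fin (p+1) → Bool) → ℝ) (hμ0 : ∀ x, 0 ≤ μ x)
    (hbal : ∀ f, ∑ η, μ η * (LS p f η + LC p cR f η) = 0)
    (ξ : Fin (p+1) → Bool) (hdead : μ ξ * Rout cR ξ = 0)
    (η₀ : Fin (p+1) → Bool) (hstep : Step j₀ k₀ η₀ ξ) : μ η₀ = 0 := by
  classical
  set f : (Fin (p+1) → Bool) → ℝ := fun x => if x = ξ then 1 else 0 with hf
  have hne : η₀ ≠ ξ := Ne.symm (step_ne hstep)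
  have hsum := hbal f
  rw [← Finset.add_sum_erase _ _ (Finset.mem_univ ξ)] at hsum
  have hGξ : LS p f ξ + LC p cR f ξ = -(Rout cR ξ) := G_self cR ξ
  rw [hGξ] at hsum
  have hμξ : μ ξ * -(Rout cR ξ) = 0 := by rw [mul_neg, hdead, neg_zero]
  have hz : ∑ η ∈ Finset.univ.erase ξ, μ η * (LS p f η + LC p cR f η) = 0 := by
    rw [hμξ, zero_add] at hsum
    exact hsum
  have hterm : ∀ η ∈ Finset.univ.erase ξ, 0 ≤ μ η * (LS p f η + LC p cR f η) := by
    intro η hηm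
    have hη' : η ≠ ξ := (Finset.mem_erase.1 hηm).1
    rw [G_decomp cR ξ η hη']
    refine mul_nonneg (hμ0 η) (add_nonneg ?_ ?_)
    · exact Finset.sum_nonneg fun i _ => ind_nonneg _
    · refine Finset.sum_nonneg fun j _ => Finset.sum_nonneg fun k _ => ?_
      exact mul_nonneg (mul_nonneg (hc j k) (wf_nonneg η j k)) (ind_nonneg _)
  have h0 := (Finset.sum_eq_zero_iff_of_nonneg hterm).1 hz η₀
    (Finset.mem_erase.2 ⟨hne, Finset.mem_univ _⟩)
  have hGpos : 0 < LS p f η₀ + LC p cR f η₀ := by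
    rw [G_decomp cR ξ η₀ hne]
    have hA : (0:ℝ) ≤ ∑ i : Fin p, if swapCfg η₀ i.castSucc i.succ = ξ then (1:ℝ) else 0 :=
      Finset.sum_nonneg fun i _ => ind_nonneg _
    have hB : (0:ℝ) ≤ ∑ j, ∑ k, cR j k * wf η₀ j k *
        (if flipCfg η₀ j = ξ then (1:ℝ) else 0) :=
      Finset.sum_nonneg fun j _ => Finset.sum_nonneg fun k _ =>
        mul_nonneg (mul_nonneg (hc j k) (wf_nonneg η₀ j k)) (ind_nonneg _)
    rcases hstep with ⟨i, hξ, _⟩ | ⟨hξ, hd⟩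
    · have h1 : (1:ℝ) ≤ ∑ i : Fin p,
          if swapCfg η₀ i.castSucc i.succ = ξ then (1:ℝ) else 0 := by
        have hle := Finset.single_le_sum
          (f := fun i : Fin p => if swapCfg η₀ i.castSucc i.succ = ξ then (1:ℝ) else 0)
          (fun i _ => ind_nonneg _) (Finset.mem_univ i)
        simp only [if_pos hξ.symm] at hle
        exact hle
      linarith
    · have hwf : wf η₀ j₀ k₀ = 1 := by rw [wf_eq, if_neg hd]
      have h2 : cR j₀ k₀ ≤ ∑ j, ∑ k, cR j k * wf η₀ j k *
          (if flipCfg η₀ j = ξ then (1:ℝ) else 0) := by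
        have hstep1 : cR j₀ k₀ ≤ ∑ k, cR j₀ k * wf η₀ j₀ k *
            (if flipCfg η₀ j₀ = ξ then (1:ℝ) else 0) := by
          have hle := Finset.single_le_sum
            (f := fun k => cR j₀ k * wf η₀ j₀ k * (if flipCfg η₀ j₀ = ξ then (1:ℝ) else 0))
            (fun k _ => mul_nonneg (mul_nonneg (hc j₀ k) (wf_nonneg η₀ j₀ k)) (ind_nonneg _))
            (Finset.mem_univ k₀)
          calc cR j₀ k₀
              = cR j₀ k₀ * wf η₀ j₀ k₀ * (if flipCfg η₀ j₀ = ξ then (1:ℝ) else 0) := by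
                rw [hwf, if_pos hξ.symm]; ring
            _ ≤ _ := hle
        have hstep2 := Finset.single_le_sum
          (f := fun j => ∑ k, cR j k * wf η₀ j k * (if flipCfg η₀ j = ξ then (1:ℝ) else 0))
          (fun j _ => Finset.sum_nonneg fun k _ =>
            mul_nonneg (mul_nonneg (hc j k) (wf_nonneg η₀ j k)) (ind_nonneg _))
          (Finset.mem_univ j₀)
        exact le_trans hstep1 hstep2
      linarith
  rcases mul_eq_zero.1 h0 with h | h
  · exact h
  · exfalso; rw [h] at hGpos; exact lt_irrefl 0 hGpos

lemma mu_zero_of_reach (cR : Fin (p+1) → Fin (p+1) → ℝ) (hc : ∀ j k, 0 ≤ cR j k)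
    (j₀ k₀ : Fin (p+1)) (hpos : 0 < cR j₀ k₀)
    (μ : (Fin (p+1) → Bool) → ℝ) (hμ0 : ∀ x, 0 ≤ μ x)
    (hbal : ∀ f, ∑ η, μ η * (LS p f η + LC p cR f η) = 0)
    (ζ : Fin (p+1) → Bool) (hζ : Rout cR ζ = 0)
    (η : Fin (p+1) → Bool) (h : Relation.ReflTransGen (Step j₀ k₀) η ζ) :
    μ η = 0 ∨ η = ζ := by
  induction h using Relation.ReflTransGen.head_induction_on with
  | refl => exact Or.inr rfl
  | head hstep _ ih =>
    left
    rcases ih with h0 | rfl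
    · exact propagate cR hc j₀ k₀ hpos μ hμ0 hbal _ (by rw [h0, zero_mul]) _ hstep
    · exact propagate cR hc j₀ k₀ hpos μ hμ0 hbal _ (by rw [hζ, mul_zero]) _ hstep


end Stmt4Aux


/-- if `Σ_j r_j + Σ_{j,k} a_{j,k} = 0` and `Σ_{j,k} c_{j,k} > 0`,
then a probability measure is stationary for `L_l = L_S + L_R + L_C + L_A`
iff it is supported on the two constant configurations (all occupied / all empty). -/
theorem stmt4 (p : ℕ) (r α : Fin (p+1) → ℝ) (cR aR : Fin (p+1) → Fin (p+1) → ℝ)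
    (hr : ∀ j, 0 ≤ r j) (hα0 : ∀ j, 0 ≤ α j) (hα1 : ∀ j, α j ≤ 1)
    (hc : ∀ j k, 0 ≤ cR j k) (ha : ∀ j k, 0 ≤ aR j k)
    (hcd : ∀ j, cR j j = 0) (had : ∀ j, aR j j = 0)
    (hzero : (∑ j, r j) + (∑ j, ∑ k, aR j k) = 0)
    (hcpos : 0 < ∑ j, ∑ k, cR j k) :
    ∀ μ : (Fin (p+1) → Bool) → ℝ,
      IsStationaryL (fun f η => LS p f η + LR p r α f η + LC p cR f η + LA p aR f η) μ ↔
        ((∀ η, 0 ≤ μ η) ∧ (∑ η, μ η = 1) ∧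
          ∀ η : Fin (p+1) → Bool,
            η ≠ (fun _ => true) → η ≠ (fun _ => false) → μ η = 0) := by
  classical
  -- the reservoir and anti-copying rates vanish
  have hrs : 0 ≤ ∑ j, r j := Finset.sum_nonneg fun j _ => hr j
  have has : 0 ≤ ∑ j, ∑ k, aR j k :=
    Finset.sum_nonneg fun j _ => Finset.sum_nonneg fun k _ => ha j k
  have hrsum : ∑ j, r j = 0 := by linarith
  have hasum : ∑ j, ∑ k, aR j k = 0 := by linarith
  have r0 : ∀ j, r j = 0 := fun j =>
    (Finset.sum_eq_zero_iff_of_nonneg (fun j _ => hr j)).1 hrsum j (Finset.mem_univ j)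
  have a0 : ∀ j k, aR j k = 0 := by
    intro j k
    have hrow : ∑ k, aR j k = 0 :=
      (Finset.sum_eq_zero_iff_of_nonneg
        (fun j _ => Finset.sum_nonneg fun k _ => ha j k)).1 hasum j (Finset.mem_univ j)
    exact (Finset.sum_eq_zero_iff_of_nonneg (fun k _ => ha j k)).1 hrow k (Finset.mem_univ k)
  have hLR0 : ∀ (f : (Fin (p+1) → Bool) → ℝ) η, LR p r α f η = 0 := by
    intro f η
    exact Finset.sum_eq_zero fun j _ => by rw [r0 j]; ring
  have hLA0 : ∀ (f : (Fin (p+1) → Bool) → ℝ) η, LA p aR f η = 0 := by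
    intro f η
    exact Finset.sum_eq_zero fun j _ => Finset.sum_eq_zero fun k _ => by rw [a0 j k]; ring
  -- a pair with positive copying rate
  obtain ⟨j₀, k₀, hpos⟩ : ∃ j k, 0 < cR j k := by
    by_contra hcon
    push_neg at hcon
    have : ∑ j, ∑ k, cR j k ≤ 0 :=
      Finset.sum_nonpos fun j _ => Finset.sum_nonpos fun k _ => hcon j k
    linarith
  have hjk : j₀ ≠ k₀ := by
    intro h
    rw [h, hcd k₀] at hpos
    exact lt_irrefl 0 hpos
  intro μ
  constructor
  · rintro ⟨hμ0, hμ1, hμL⟩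
    refine ⟨hμ0, hμ1, ?_⟩
    intro η hη1 hη2
    have hbal : ∀ f, ∑ x, μ x * (LS p f x + LC p cR f x) = 0 := by
      intro f
      have h := hμL f
      calc ∑ x, μ x * (LS p f x + LC p cR f x)
          = ∑ x, μ x * (LS p f x + LR p r α f x + LC p cR f x + LA p aR f x) := by
            apply Finset.sum_congr rfl
            intro x _
            rw [hLR0 f x, hLA0 f x]
            ring
        _ = 0 := h
    rcases Stmt4Aux.reach_const j₀ k₀ hjk (Stmt4Aux.Ncount η) η le_rfl with hre | hre
    · rcases Stmt4Aux.mu_zero_of_reach cR hc j₀ k₀ hpos μ hμ0 hbal _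
        (Stmt4Aux.Rout_const cR true) η hre with h | h
      · exact h
      · exact absurd h hη1
    · rcases Stmt4Aux.mu_zero_of_reach cR hc j₀ k₀ hpos μ hμ0 hbal _
        (Stmt4Aux.Rout_const cR false) η hre with h | h
      · exact h
      · exact absurd h hη2
  · rintro ⟨hμ0, hμ1, hsupp⟩
    refine ⟨hμ0, hμ1, ?_⟩
    intro f
    apply Finset.sum_eq_zero
    intro η _
    have hconst : ∀ b : Bool,
        LS p f (fun _ => b) + LR p r α f (fun _ => b) + LC p cR f (fun _ => b) +
          LA p aR f (fun _ => b) = 0 := by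
      intro b
      have h1 : LS p f (fun _ => b) = 0 := by
        apply Finset.sum_eq_zero
        intro i _
        rw [Stmt4Aux.swapCfg_const b]
        ring
      have h2 : LC p cR f (fun _ => b) = 0 := by
        apply Finset.sum_eq_zero
        intro j _
        apply Finset.sum_eq_zero
        intro k _
        have : occ ((fun _ => b : Fin (p+1) → Bool) k) *
            (1 - occ ((fun _ => b : Fin (p+1) → Bool) j)) +
            occ ((fun _ => b : Fin (p+1) → Bool) j) *
            (1 - occ ((fun _ => b : Fin (p+1) → Bool) k)) = 0 := by
          cases b <;> simp [occ]
        rw [this]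
        ring
      rw [h1, h2, hLR0, hLA0]
      ring
    by_cases hη1 : η = fun _ => true
    · rw [hη1]
      exact mul_eq_zero_of_right _ (hconst true)
    · by_cases hη2 : η = fun _ => false
      · rw [hη2]
        exact mul_eq_zero_of_right _ (hconst false)
      · exact mul_eq_zero_of_left (hsupp η hη1 hη2) _
end

section
/- Suppose Σ_{j∈Λ*_p} r_j + Σ_{j,k∈Λ*_p} a_{j,k} > 0. Then there exists a unique function ρ: Λ*_p → ℝ satisfying the system (*): 0 = r_j[α_j − ρ(j)] + (𝒞ρ)(j) + (𝒜ρ)(j) + (𝒯ρ)(j) for all j ∈ Λ*_p. -/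
open Finset

/- The sites of `Λ*_p = {-p, …, 0}` are indexed by `Fin (p+1)`, the index `i`
corresponding to the site `i - p`.  (For the discrete Laplacian `𝒯` to make
sense, `Λ*_p` must contain at least two sites, i.e. `1 ≤ p`.) -/

/-- `(𝒞ρ)(j) = Σ_k c_{j,k} [ρ(k) − ρ(j)]`. -/
def CSum (p : ℕ) (cR : Fin (p+1) → Fin (p+1) → ℝ) (ρ : Fin (p+1) → ℝ)
    (j : Fin (p+1)) : ℝ :=
  ∑ k : Fin (p+1), cR j k * (ρ k - ρ j)

/-- `(𝒜ρ)(j) = Σ_k a_{j,k} [1 − ρ(k) − ρ(j)]`. -/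
def ASum (p : ℕ) (aR : Fin (p+1) → Fin (p+1) → ℝ) (ρ : Fin (p+1) → ℝ)
    (j : Fin (p+1)) : ℝ :=
  ∑ k : Fin (p+1), aR j k * (1 - ρ k - ρ j)

/-- `(𝒯ρ)(j)`: Neumann discrete Laplacian on `Λ*_p` (index `0` is site `-p`,
index `p` is site `0`). -/
def TSum (p : ℕ) (hp : 1 ≤ p) (ρ : Fin (p+1) → ℝ) (j : Fin (p+1)) : ℝ :=
  if j.1 = 0 then ρ ⟨1, by omega⟩ - ρ ⟨0, by omega⟩
  else if h : j.1 = p then ρ ⟨p - 1, by omega⟩ - ρ ⟨p, by omega⟩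
  else ρ ⟨j.1 + 1, by have := j.isLt; omega⟩ + ρ ⟨j.1 - 1, by omega⟩ - 2 * ρ j

set_option maxHeartbeats 1000000 in
/-- The homogeneous linear system forces neighbors of a maximizer of `|ρ|`
to take the same value as the maximizer. -/
lemma neighbor_eq (p : ℕ) (hp : 1 ≤ p)
    (r : Fin (p+1) → ℝ) (cR aR : Fin (p+1) → Fin (p+1) → ℝ)
    (hr : ∀ j, 0 ≤ r j) (hc : ∀ j k, 0 ≤ cR j k) (ha : ∀ j k, 0 ≤ aR j k)
    (ρ : Fin (p+1) → ℝ)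
    (h : ∀ j, r j * ρ j + ∑ k, aR j k * (ρ k + ρ j)
          = CSum p cR ρ j + TSum p hp ρ j)
    (M : ℝ) (hM : ∀ k, |ρ k| ≤ M) (j : Fin (p+1)) (hj : |ρ j| = M) :
    (∀ _ : j.1 < p, ρ ⟨j.1+1, by omega⟩ = ρ j) ∧
    (∀ _ : 0 < j.1, ρ ⟨j.1-1, by omega⟩ = ρ j) := by
  classical
  set ε : ℝ := if 0 ≤ ρ j then 1 else -1 with hε
  have hεnum : ε = 1 ∨ ε = -1 := by rw [hε]; split_ifs <;> simp
  have hε0 : ε ≠ 0 := by rcases hεnum with h'|h' <;> rw [h'] <;> norm_num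
  have hεj : ε * ρ j = M := by
    rw [hε]; split_ifs with h'
    · simpa [abs_of_nonneg h'] using hj
    · rw [← hj, abs_of_neg (lt_of_not_ge h')]; ring
  have hM0 : 0 ≤ M := hj ▸ abs_nonneg (ρ j)
  have hεk : ∀ k, -M ≤ ε * ρ k ∧ ε * ρ k ≤ M := by
    intro k
    have h1 : |ε * ρ k| ≤ M := by
      rw [abs_mul]
      rcases hεnum with h'|h' <;> rw [h'] <;> simpa using hM k
    exact abs_le.mp h1
  have key : r j * M + (∑ k, aR j k * (ε * ρ k + M))
      = (∑ k, cR j k * (ε * ρ k - M)) + ε * TSum p hp ρ j := by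
    have h0 : ε * (r j * ρ j + ∑ k, aR j k * (ρ k + ρ j))
        = ε * (CSum p cR ρ j + TSum p hp ρ j) := by rw [h j]
    calc r j * M + (∑ k, aR j k * (ε * ρ k + M))
        = ε * (r j * ρ j + ∑ k, aR j k * (ρ k + ρ j)) := by
          rw [mul_add, Finset.mul_sum]
          congr 1
          · rw [← hεj]; ring
          · refine Finset.sum_congr rfl fun k _ => ?_
            rw [← hεj]; ring
      _ = ε * (CSum p cR ρ j + TSum p hp ρ j) := h0
      _ = (∑ k, cR j k * (ε * ρ k - M)) + ε * TSum p hp ρ j := by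
          rw [mul_add]
          congr 1
          rw [CSum, Finset.mul_sum]
          refine Finset.sum_congr rfl fun k _ => ?_
          rw [← hεj]; ring
  have hA : 0 ≤ ∑ k, aR j k * (ε * ρ k + M) :=
    Finset.sum_nonneg fun k _ => mul_nonneg (ha j k) (by linarith [(hεk k).1])
  have hC : (∑ k, cR j k * (ε * ρ k - M)) ≤ 0 :=
    Finset.sum_nonpos fun k _ =>
      mul_nonpos_of_nonneg_of_nonpos (hc j k) (by linarith [(hεk k).2])
  have hrM : 0 ≤ r j * M := mul_nonneg (hr j) hM0
  have cancel : ∀ x : Fin (p+1), ε * ρ x = M → ρ x = ρ j := by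
    intro x hx
    have hxx : ε * ρ x = ε * ρ j := by rw [hx, hεj]
    exact mul_left_cancel₀ hε0 hxx
  constructor
  · intro hlt
    by_cases hj0 : j.1 = 0
    · have hjeq : (⟨0, by omega⟩ : Fin (p+1)) = j := Fin.ext hj0.symm
      have hT : TSum p hp ρ j = ρ ⟨1, by omega⟩ - ρ j := by
        rw [TSum, if_pos hj0, hjeq]
      have hfin : (⟨j.1+1, by omega⟩ : Fin (p+1)) = ⟨1, by omega⟩ :=
        Fin.ext (show j.1 + 1 = 1 by omega)
      rw [hfin]
      apply cancel
      have hb := (hεk ⟨1, by omega⟩).2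
      have h1 : ε * TSum p hp ρ j = ε * (ρ ⟨1, by omega⟩ - ρ j) :=
        congrArg (fun x => ε * x) hT
      have hTe : ε * TSum p hp ρ j = ε * ρ ⟨1, by omega⟩ - M := by
        linear_combination h1 - hεj
      linarith [key, hTe]
    · have hjp : j.1 ≠ p := by omega
      have hT : TSum p hp ρ j
          = ρ ⟨j.1+1, by omega⟩ + ρ ⟨j.1-1, by omega⟩ - 2 * ρ j := by
        rw [TSum, if_neg hj0, dif_neg hjp]
      have hb1 := (hεk ⟨j.1+1, by omega⟩).2
      have hb2 := (hεk ⟨j.1-1, by omega⟩).2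
      have h1 : ε * TSum p hp ρ j
          = ε * (ρ ⟨j.1+1, by omega⟩ + ρ ⟨j.1-1, by omega⟩ - 2 * ρ j) :=
        congrArg (fun x => ε * x) hT
      have hTe : ε * TSum p hp ρ j
          = ε * ρ ⟨j.1+1, by omega⟩ + ε * ρ ⟨j.1-1, by omega⟩ - 2 * M := by
        linear_combination h1 - 2 * hεj
      exact cancel _ (by linarith [key, hTe])
  · intro hgt
    by_cases hjp : j.1 = p
    · have hjeq : (⟨p, by omega⟩ : Fin (p+1)) = j := Fin.ext hjp.symm
      have hj0 : j.1 ≠ 0 := by omega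
      have hρp : ρ ⟨p, by omega⟩ = ρ j := congrArg ρ hjeq
      have hT : TSum p hp ρ j = ρ ⟨p-1, by omega⟩ - ρ ⟨p, by omega⟩ := by
        rw [TSum, if_neg hj0, dif_pos hjp]
      have hfin : (⟨j.1-1, by omega⟩ : Fin (p+1)) = ⟨p-1, by omega⟩ :=
        Fin.ext (show j.1 - 1 = p - 1 by omega)
      rw [hfin]
      apply cancel
      have hb := (hεk ⟨p-1, by omega⟩).2
      have h1 : ε * TSum p hp ρ j = ε * (ρ ⟨p-1, by omega⟩ - ρ ⟨p, by omega⟩) :=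
        congrArg (fun x => ε * x) hT
      have h2 : ε * ρ ⟨p, by omega⟩ = M := (congrArg (fun x => ε * x) hρp).trans hεj
      have hTe : ε * TSum p hp ρ j = ε * ρ ⟨p-1, by omega⟩ - M := by
        linear_combination h1 - h2
      linarith [key, hTe]
    · have hj0 : j.1 ≠ 0 := by omega
      have hT : TSum p hp ρ j
          = ρ ⟨j.1+1, by omega⟩ + ρ ⟨j.1-1, by omega⟩ - 2 * ρ j := by
        rw [TSum, if_neg hj0, dif_neg hjp]
      have hb1 := (hεk ⟨j.1+1, by omega⟩).2
      have hb2 := (hεk ⟨j.1-1, by omega⟩).2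
      have h1 : ε * TSum p hp ρ j
          = ε * (ρ ⟨j.1+1, by omega⟩ + ρ ⟨j.1-1, by omega⟩ - 2 * ρ j) :=
        congrArg (fun x => ε * x) hT
      have hTe : ε * TSum p hp ρ j
          = ε * ρ ⟨j.1+1, by omega⟩ + ε * ρ ⟨j.1-1, by omega⟩ - 2 * M := by
        linear_combination h1 - 2 * hεj
      exact cancel _ (by linarith [key, hTe])

set_option maxHeartbeats 1000000 in
/-- The homogeneous system has only the zero solution. -/
lemma ker_zero (p : ℕ) (hp : 1 ≤ p)
    (r : Fin (p+1) → ℝ) (cR aR : Fin (p+1) → Fin (p+1) → ℝ)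
    (hr : ∀ j, 0 ≤ r j) (hc : ∀ j k, 0 ≤ cR j k) (ha : ∀ j k, 0 ≤ aR j k)
    (hpos : 0 < (∑ j, r j) + ∑ j, ∑ k, aR j k)
    (ρ : Fin (p+1) → ℝ)
    (h : ∀ j, r j * ρ j + ∑ k, aR j k * (ρ k + ρ j)
          = CSum p cR ρ j + TSum p hp ρ j) :
    ρ = 0 := by
  obtain ⟨i₀, hi₀⟩ := Finite.exists_max (fun k => |ρ k|)
  set M := |ρ i₀| with hMdef
  have hM0 : 0 ≤ M := abs_nonneg _
  rcases eq_or_lt_of_le hM0 with hM|hM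
  · funext k
    have hk : |ρ k| ≤ 0 := by rw [hM]; exact hi₀ k
    simpa using abs_eq_zero.mp (le_antisymm hk (abs_nonneg _))
  · exfalso
    have nb := neighbor_eq p hp r cR aR hr hc ha ρ h M hi₀
    have up : ∀ d : ℕ, ∀ _ : i₀.1 + d ≤ p, ρ ⟨i₀.1 + d, by omega⟩ = ρ i₀ := by
      intro d
      induction d with
      | zero => intro _; exact congrArg ρ (Fin.ext (by simp))
      | succ d ih =>
        intro hd
        have h1 : ρ ⟨i₀.1 + d, by omega⟩ = ρ i₀ := ih (by omega)
        have h2 := (nb ⟨i₀.1 + d, by omega⟩ (by rw [h1])).1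
          (show i₀.1 + d < p by omega)
        exact h2.trans h1
    have down : ∀ d : ℕ, ∀ _ : d ≤ i₀.1, ρ ⟨i₀.1 - d, by omega⟩ = ρ i₀ := by
      intro d
      induction d with
      | zero => intro _; exact congrArg ρ (Fin.ext (by simp))
      | succ d ih =>
        intro hd
        have h1 : ρ ⟨i₀.1 - d, by omega⟩ = ρ i₀ := ih (by omega)
        have h2 := (nb ⟨i₀.1 - d, by omega⟩ (by rw [h1])).2
          (show 0 < i₀.1 - d by omega)
        exact h2.trans h1
    have hall : ∀ j : Fin (p+1), ρ j = ρ i₀ := by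
      intro j
      rcases le_or_gt j.1 i₀.1 with hle|hlt
      · have hthis := down (i₀.1 - j.1) (by omega)
        have hfin : (⟨i₀.1 - (i₀.1 - j.1), by omega⟩ : Fin (p+1)) = j :=
          Fin.ext (show i₀.1 - (i₀.1 - j.1) = j.1 by omega)
        rwa [hfin] at hthis
      · have hthis := up (j.1 - i₀.1) (by omega)
        have hfin : (⟨i₀.1 + (j.1 - i₀.1), by omega⟩ : Fin (p+1)) = j :=
          Fin.ext (show i₀.1 + (j.1 - i₀.1) = j.1 by omega)
        rwa [hfin] at hthis
    set v := ρ i₀ with hv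
    have hvne : v ≠ 0 := by
      intro h0
      rw [h0] at hMdef
      simp only [abs_zero] at hMdef
      rw [hMdef] at hM
      exact lt_irrefl 0 hM
    have each : ∀ j, r j = 0 ∧ (∑ k, aR j k) = 0 := by
      intro j
      have h0 := h j
      have hCz : CSum p cR ρ j = 0 := by
        rw [CSum]
        exact Finset.sum_eq_zero fun k _ => by rw [hall k, hall j]; ring
      have hTz : TSum p hp ρ j = 0 := by
        rw [TSum]
        split_ifs <;> (simp only [hall]; ring)
      have hAz : (∑ k, aR j k * (ρ k + ρ j)) = (∑ k, aR j k) * (2 * v) := by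
        rw [Finset.sum_mul]
        exact Finset.sum_congr rfl fun k _ => by rw [hall k, hall j]; ring
      rw [hCz, hTz, hAz, hall j] at h0
      have hfac : (r j + 2 * ∑ k, aR j k) * v = 0 := by linear_combination h0
      have hsum0 : r j + 2 * ∑ k, aR j k = 0 :=
        (mul_eq_zero.mp hfac).resolve_right hvne
      have hAnn : 0 ≤ ∑ k, aR j k := Finset.sum_nonneg fun k _ => ha j k
      constructor <;> linarith [hr j]
    have hr0 : (∑ j, r j) = 0 := Finset.sum_eq_zero fun j _ => (each j).1
    have ha0 : (∑ j, ∑ k, aR j k) = 0 :=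
      Finset.sum_eq_zero fun j _ => (each j).2
    rw [hr0, ha0] at hpos
    simp at hpos

/-- The linear part of the system, as a linear map. -/
noncomputable def Lmap (p : ℕ) (hp : 1 ≤ p) (r : Fin (p+1) → ℝ)
    (cR aR : Fin (p+1) → Fin (p+1) → ℝ) :
    (Fin (p+1) → ℝ) →ₗ[ℝ] (Fin (p+1) → ℝ) where
  toFun ρ := fun j => r j * ρ j - CSum p cR ρ j
      + (∑ k, aR j k * (ρ k + ρ j)) - TSum p hp ρ j
  map_add' ρ σ := by
    funext j
    show r j * (ρ + σ) j - CSum p cR (ρ + σ) j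
        + (∑ k, aR j k * ((ρ + σ) k + (ρ + σ) j)) - TSum p hp (ρ + σ) j
      = (r j * ρ j - CSum p cR ρ j + (∑ k, aR j k * (ρ k + ρ j)) - TSum p hp ρ j)
        + (r j * σ j - CSum p cR σ j + (∑ k, aR j k * (σ k + σ j)) - TSum p hp σ j)
    have hC : CSum p cR (ρ + σ) j = CSum p cR ρ j + CSum p cR σ j := by
      simp only [CSum, Pi.add_apply, ← Finset.sum_add_distrib]
      exact Finset.sum_congr rfl fun k _ => by ring
    have hT : TSum p hp (ρ + σ) j = TSum p hp ρ j + TSum p hp σ j := by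
      simp only [TSum, Pi.add_apply]
      split_ifs <;> ring
    have hA : (∑ k, aR j k * ((ρ + σ) k + (ρ + σ) j))
        = (∑ k, aR j k * (ρ k + ρ j)) + ∑ k, aR j k * (σ k + σ j) := by
      simp only [Pi.add_apply, ← Finset.sum_add_distrib]
      exact Finset.sum_congr rfl fun k _ => by ring
    rw [hC, hT, hA]
    simp only [Pi.add_apply]
    ring
  map_smul' t ρ := by
    funext j
    show r j * (t • ρ) j - CSum p cR (t • ρ) j
        + (∑ k, aR j k * ((t • ρ) k + (t • ρ) j)) - TSum p hp (t • ρ) j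
      = t * (r j * ρ j - CSum p cR ρ j + (∑ k, aR j k * (ρ k + ρ j)) - TSum p hp ρ j)
    have hC : CSum p cR (t • ρ) j = t * CSum p cR ρ j := by
      simp only [CSum, Pi.smul_apply, smul_eq_mul, Finset.mul_sum]
      exact Finset.sum_congr rfl fun k _ => by ring
    have hT : TSum p hp (t • ρ) j = t * TSum p hp ρ j := by
      simp only [TSum, Pi.smul_apply, smul_eq_mul]
      split_ifs <;> ring
    have hA : (∑ k, aR j k * ((t • ρ) k + (t • ρ) j))
        = t * ∑ k, aR j k * (ρ k + ρ j) := by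
      simp only [Pi.smul_apply, smul_eq_mul, Finset.mul_sum]
      exact Finset.sum_congr rfl fun k _ => by ring
    rw [hC, hT, hA]
    simp only [Pi.smul_apply, smul_eq_mul, RingHom.id_apply]
    ring

set_option maxHeartbeats 1000000 in
/-- if `Σ_j r_j + Σ_{j,k} a_{j,k} > 0`, the system (*)
`0 = r_j[α_j − ρ(j)] + (𝒞ρ)(j) + (𝒜ρ)(j) + (𝒯ρ)(j)` has a unique solution. -/
theorem stmt5 (p : ℕ) (hp : 1 ≤ p)
    (r α : Fin (p+1) → ℝ) (cR aR : Fin (p+1) → Fin (p+1) → ℝ)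
    (hr : ∀ j, 0 ≤ r j) (hα0 : ∀ j, 0 ≤ α j) (hα1 : ∀ j, α j ≤ 1)
    (hc : ∀ j k, 0 ≤ cR j k) (ha : ∀ j k, 0 ≤ aR j k)
    (hcd : ∀ j, cR j j = 0) (had : ∀ j, aR j j = 0)
    (hpos : 0 < (∑ j, r j) + ∑ j, ∑ k, aR j k) :
    ∃! ρ : Fin (p+1) → ℝ,
      ∀ j : Fin (p+1),
        0 = r j * (α j - ρ j) + CSum p cR ρ j + ASum p aR ρ j + TSum p hp ρ j := by
  set L := Lmap p hp r cR aR with hL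
  have hLapp : ∀ (ρ : Fin (p+1) → ℝ) (j : Fin (p+1)),
      L ρ j = r j * ρ j - CSum p cR ρ j
        + (∑ k, aR j k * (ρ k + ρ j)) - TSum p hp ρ j := fun ρ j => rfl
  have hker : ∀ ρ : Fin (p+1) → ℝ, L ρ = 0 → ρ = 0 := by
    intro ρ h0
    apply ker_zero p hp r cR aR hr hc ha hpos ρ
    intro j
    have h1 := congrFun h0 j
    rw [hLapp ρ j] at h1
    simp only [Pi.zero_apply] at h1
    linarith
  have hinj : Function.Injective L := by
    intro x y hxy
    have h0 : L (x - y) = 0 := by rw [map_sub, hxy, sub_self]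
    have h1 := hker (x - y) h0
    exact sub_eq_zero.mp h1
  have hsurj : Function.Surjective L := LinearMap.injective_iff_surjective.mp hinj
  set b : Fin (p+1) → ℝ := fun j => r j * α j + ∑ k, aR j k with hb
  obtain ⟨ρ₀, hρ₀⟩ := hsurj b
  have hiff : ∀ ρ : Fin (p+1) → ℝ,
      (∀ j, 0 = r j * (α j - ρ j) + CSum p cR ρ j + ASum p aR ρ j + TSum p hp ρ j)
      ↔ L ρ = b := by
    intro ρ
    rw [funext_iff]
    apply forall_congr'
    intro j
    have hA : ASum p aR ρ j = (∑ k, aR j k) - ∑ k, aR j k * (ρ k + ρ j) := by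
      rw [ASum, ← Finset.sum_sub_distrib]
      exact Finset.sum_congr rfl fun k _ => by ring
    have hbj : b j = r j * α j + ∑ k, aR j k := rfl
    rw [hLapp ρ j, hbj, hA]
    constructor
    · intro h'; linarith
    · intro h'; linarith
  exact ⟨ρ₀, (hiff ρ₀).mpr hρ₀, fun ρ' h' => hinj (((hiff ρ').mp h').trans hρ₀.symm)⟩
end

section
/- Let S be a finite set, L the generator of an irreducible continuous-time Markov chain on S with unique stationary probability measure μ, and L* the adjoint of L in L²(μ). Then there exists a finite constant C₀, depending only on the chain, such that for every ε > 0 and every function F: S → [0,∞) with Σ_{x∈S} F(x)μ(x) = 1 and Σ_{x∈S} |(L*F)(x)| μ(x) ≤ ε, one has max_{x∈S} |F(x) − 1| ≤ C₀ √ε. -/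
open Finset

/-- A stationary state of a generator `L` on a finite set `S`. -/
def IsStationaryGen {S : Type*} [Fintype S] (L : (S → ℝ) → S → ℝ) (μ : S → ℝ) : Prop :=
  (∀ x, 0 ≤ μ x) ∧ (∑ x, μ x = 1) ∧ ∀ f : S → ℝ, ∑ x, μ x * L f x = 0

/-- The generator of the continuous-time Markov chain on `S` with jump rates `R`. -/
def chainGen {S : Type*} [Fintype S] (R : S → S → ℝ)
    (f : S → ℝ) (x : S) : ℝ :=
  ∑ y, R x y * (f y - f x)

/-- Along a reflexive-transitive path there is a constant `C` such that if each
edge increment of `F` is bounded by `B`, the endpoint difference is at most `C*B`. -/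
lemma exists_path_const {S : Type*} (r : S → S → Prop) (x y : S)
    (h : Relation.ReflTransGen r x y) :
    ∃ C : ℝ, 0 ≤ C ∧ ∀ (F : S → ℝ) (B : ℝ), 0 ≤ B →
      (∀ a b, r a b → |F b - F a| ≤ B) → |F y - F x| ≤ C * B := by
  induction h with
  | refl => exact ⟨0, le_refl 0, fun F B hB _ => by simp⟩
  | @tail b c hxb hbc ih =>
    obtain ⟨C, hC, hCb⟩ := ih
    refine ⟨C + 1, by linarith, fun F B hB hedge => ?_⟩
    have h1 := hCb F B hB hedge
    have h2 := hedge _ _ hbc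
    calc |F c - F x| ≤ |F c - F b| + |F b - F x| := abs_sub_le _ _ _
      _ ≤ B + C * B := add_le_add h2 h1
      _ = (C + 1) * B := by ring

/-- for an irreducible chain on a finite set `S` with stationary
state `μ` and `L²(μ)`-adjoint `L*`, there is a constant `C₀` (depending only on
the chain) such that every non-negative density `F` (`Σ F μ = 1`) with
`Σ |L*F| μ ≤ ε` satisfies `max_x |F(x) − 1| ≤ C₀ √ε`. -/
theorem stmt18 {S : Type*} [Fintype S] [Nonempty S]
    (R : S → S → ℝ) (hR : ∀ x y, 0 ≤ R x y)
    (hirr : ∀ x y : S, Relation.ReflTransGen (fun a b => 0 < R a b) x y)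
    (μ : S → ℝ) (hμ : IsStationaryGen (chainGen R) μ) (hμpos : ∀ x, 0 < μ x)
    (Lstar : (S → ℝ) → S → ℝ)
    (hadj : ∀ f g : S → ℝ,
      ∑ x, μ x * f x * Lstar g x = ∑ x, μ x * g x * chainGen R f x) :
    ∃ C₀ : ℝ, ∀ ε : ℝ, 0 < ε → ∀ F : S → ℝ,
      (∀ x, 0 ≤ F x) → (∑ x, F x * μ x = 1) →
      (∑ x, |Lstar F x| * μ x ≤ ε) →
      ∀ x, |F x - 1| ≤ C₀ * Real.sqrt ε := by
  classical
  -- minimum of μ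
  set m : ℝ := Finset.univ.inf' Finset.univ_nonempty μ with hm
  have hmpos : 0 < m := by
    rw [hm, Finset.lt_inf'_iff]
    exact fun x _ => hμpos x
  have hmle : ∀ x, m ≤ μ x := fun x => Finset.inf'_le _ (Finset.mem_univ x)
  -- minimum of μ a * R a b over edges
  set E : Finset (S × S) := Finset.univ.filter (fun p : S × S => 0 < R p.1 p.2) with hE
  set c : ℝ := if h : E.Nonempty then E.inf' h (fun p => μ p.1 * R p.1 p.2) else 1 with hc
  have hcpos : 0 < c := by
    rw [hc]
    split_ifs with h
    · rw [Finset.lt_inf'_iff]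
      intro p hp
      have : 0 < R p.1 p.2 := (Finset.mem_filter.mp hp).2
      exact mul_pos (hμpos p.1) this
    · norm_num
  have hcle : ∀ a b, 0 < R a b → c ≤ μ a * R a b := by
    intro a b hab
    have hmem : (a, b) ∈ E := by
      rw [hE]; simp [hab]
    rw [hc]
    rw [dif_pos ⟨(a, b), hmem⟩]
    exact Finset.inf'_le _ hmem
  -- path constants
  have hpc := fun x y => exists_path_const (fun a b => 0 < R a b) x y (hirr x y)
  set Cf : S → S → ℝ := fun x y => (hpc x y).choose with hCf
  have hCf0 : ∀ x y, 0 ≤ Cf x y := fun x y => (hpc x y).choose_spec.1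
  have hCfb : ∀ x y (F : S → ℝ) (B : ℝ), 0 ≤ B →
      (∀ a b, 0 < R a b → |F b - F a| ≤ B) → |F y - F x| ≤ Cf x y * B :=
    fun x y => (hpc x y).choose_spec.2
  set C₁ : ℝ := Finset.univ.sup' Finset.univ_nonempty (fun p : S × S => Cf p.1 p.2) with hC₁
  have hC₁le : ∀ x y, Cf x y ≤ C₁ := fun x y =>
    Finset.le_sup' (f := fun p : S × S => Cf p.1 p.2) (Finset.mem_univ (x, y))
  have hC₁0 : 0 ≤ C₁ := le_trans (hCf0 (Classical.arbitrary S) (Classical.arbitrary S))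
    (hC₁le _ _)
  refine ⟨C₁ * Real.sqrt (2 / (m * c)), ?_⟩
  intro ε hε F hF hsum hLs
  have hsqε : 0 ≤ Real.sqrt ε := Real.sqrt_nonneg ε
  -- Dirichlet form identity
  set Q : ℝ := ∑ x, ∑ y, μ x * R x y * (F y - F x) ^ 2 with hQ
  have hstat : ∑ x, μ x * (∑ y, R x y * ((fun z => F z ^ 2) y - (fun z => F z ^ 2) x)) = 0 :=
    hμ.2.2 (fun z => F z ^ 2)
  have key : Q = -2 * ∑ x, μ x * F x * chainGen R F x := by
    have hstat' : ∑ x, μ x * ∑ y, R x y * (F y ^ 2 - F x ^ 2) = 0 := by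
      simpa [chainGen] using hμ.2.2 (fun z => F z ^ 2)
    have h0 : ∀ x, ∑ y, μ x * R x y * (F y - F x) ^ 2
        = μ x * (∑ y, R x y * (F y ^ 2 - F x ^ 2)) - 2 * (μ x * F x * chainGen R F x) := by
      intro x
      simp only [chainGen, Finset.mul_sum]
      rw [← Finset.sum_sub_distrib]
      exact Finset.sum_congr rfl fun y _ => by ring
    rw [hQ, Finset.sum_congr rfl fun x _ => h0 x, Finset.sum_sub_distrib, hstat', zero_sub,
      ← Finset.mul_sum]
    ring
  -- bound on Q
  have hμF1 : ∀ x, μ x * F x ≤ 1 := by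
    intro x
    have h1 : F x * μ x ≤ ∑ y, F y * μ y :=
      Finset.single_le_sum (fun y _ => mul_nonneg (hF y) (hμpos y).le) (Finset.mem_univ x)
    rw [hsum] at h1
    linarith [h1]
  have hQle : Q ≤ 2 * ε / m := by
    have hadjFF := hadj F F
    have h1 : -∑ x, μ x * F x * Lstar F x ≤ ∑ x, |Lstar F x| := by
      rw [← Finset.sum_neg_distrib]
      refine Finset.sum_le_sum fun x _ => ?_
      have h0 : -(μ x * F x * Lstar F x) ≤ μ x * F x * |Lstar F x| := by
        rw [← mul_neg]
        exact mul_le_mul_of_nonneg_left (neg_le_abs _)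
          (mul_nonneg (hμpos x).le (hF x))
      refine h0.trans ?_
      calc μ x * F x * |Lstar F x| ≤ 1 * |Lstar F x| :=
            mul_le_mul_of_nonneg_right (hμF1 x) (abs_nonneg _)
        _ = |Lstar F x| := one_mul _
    have h2 : ∑ x, |Lstar F x| ≤ ε / m := by
      have h3 : ∀ x, |Lstar F x| ≤ |Lstar F x| * μ x / m := by
        intro x
        rw [le_div_iff₀ hmpos]
        exact mul_le_mul_of_nonneg_left (hmle x) (abs_nonneg _)
      calc ∑ x, |Lstar F x| ≤ ∑ x, |Lstar F x| * μ x / m :=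
            Finset.sum_le_sum fun x _ => h3 x
        _ = (∑ x, |Lstar F x| * μ x) / m := by rw [Finset.sum_div]
        _ ≤ ε / m := by gcongr
    calc Q = -2 * ∑ x, μ x * F x * Lstar F x := by rw [key, hadjFF]
      _ = 2 * (-∑ x, μ x * F x * Lstar F x) := by ring
      _ ≤ 2 * (∑ x, |Lstar F x|) := by linarith [h1]
      _ ≤ 2 * (ε / m) := by linarith [h2]
      _ = 2 * ε / m := by ring
  -- per-edge increment bound
  set B : ℝ := Real.sqrt (2 / (m * c)) * Real.sqrt ε with hB
  have hB0 : 0 ≤ B := mul_nonneg (Real.sqrt_nonneg _) hsqε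
  have hedge : ∀ a b, 0 < R a b → |F b - F a| ≤ B := by
    intro a b hab
    have hterm : μ a * R a b * (F b - F a) ^ 2 ≤ Q := by
      have hy : ∀ y, 0 ≤ μ a * R a y * (F y - F a) ^ 2 := fun y =>
        mul_nonneg (mul_nonneg (hμpos a).le (hR a y)) (sq_nonneg _)
      have h1 : μ a * R a b * (F b - F a) ^ 2 ≤ ∑ y, μ a * R a y * (F y - F a) ^ 2 :=
        Finset.single_le_sum (fun y _ => hy y) (Finset.mem_univ b)
      refine h1.trans ?_
      refine Finset.single_le_sum (f := fun x => ∑ y, μ x * R x y * (F y - F x) ^ 2)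
        (fun x _ => Finset.sum_nonneg fun y _ =>
          mul_nonneg (mul_nonneg (hμpos x).le (hR x y)) (sq_nonneg _))
        (Finset.mem_univ a)
    have hμR : 0 < μ a * R a b := mul_pos (hμpos a) hab
    have hsq : (F b - F a) ^ 2 ≤ 2 / (m * c) * ε := by
      have h1 : (F b - F a) ^ 2 ≤ Q / (μ a * R a b) := by
        rw [le_div_iff₀ hμR]
        calc (F b - F a) ^ 2 * (μ a * R a b) = μ a * R a b * (F b - F a) ^ 2 := by ring
          _ ≤ Q := hterm
      refine h1.trans ?_
      have h2 : Q / (μ a * R a b) ≤ Q / c := by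
        apply div_le_div_of_nonneg_left ?_ hcpos (hcle a b hab)
        · calc (0:ℝ) ≤ μ a * R a b * (F b - F a) ^ 2 :=
              mul_nonneg hμR.le (sq_nonneg _)
            _ ≤ Q := hterm
      refine h2.trans ?_
      rw [div_le_iff₀ hcpos]
      calc Q ≤ 2 * ε / m := hQle
        _ = 2 / (m * c) * ε * c := by field_simp
    calc |F b - F a| = Real.sqrt ((F b - F a) ^ 2) := (Real.sqrt_sq_eq_abs _).symm
      _ ≤ Real.sqrt (2 / (m * c) * ε) := Real.sqrt_le_sqrt hsq
      _ = B := by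
          rw [hB, ← Real.sqrt_mul (by positivity) ε]
  -- all pairwise differences are small
  have hpair : ∀ x y, |F y - F x| ≤ C₁ * B := by
    intro x y
    refine (hCfb x y F B hB0 hedge).trans ?_
    exact mul_le_mul_of_nonneg_right (hC₁le x y) hB0
  -- conclude
  intro x
  have hFx1 : F x - 1 = ∑ y, (F x - F y) * μ y := by
    have h1 : ∑ y, (F x - F y) * μ y = F x * (∑ y, μ y) - ∑ y, F y * μ y := by
      rw [Finset.mul_sum, ← Finset.sum_sub_distrib]
      exact Finset.sum_congr rfl fun y _ => by ring
    rw [h1, hμ.2.1, hsum]; ring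
  calc |F x - 1| = |∑ y, (F x - F y) * μ y| := by rw [hFx1]
    _ ≤ ∑ y, |(F x - F y) * μ y| := Finset.abs_sum_le_sum_abs _ _
    _ ≤ ∑ y, C₁ * B * μ y := by
        refine Finset.sum_le_sum fun y _ => ?_
        rw [abs_mul, abs_of_nonneg (hμpos y).le]
        have : |F x - F y| = |F y - F x| := abs_sub_comm _ _
        refine mul_le_mul_of_nonneg_right ?_ (hμpos y).le
        rw [this]; exact hpair x y
    _ = C₁ * B := by rw [← Finset.mul_sum, hμ.2.1, mul_one]
    _ = C₁ * Real.sqrt (2 / (m * c)) * Real.sqrt ε := by rw [hB]; ring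
end

section
/- Fix an integer N ≥ 4 and a real number c. The function φ(j,k) = −c² (j−1)(N−k)/(N−2), defined on D̂_N ∪ ∂D̂_N, is the unique function that vanishes on ∂D̂_N and satisfies (ℒ_N φ)(j,k) + F(j,k) = 0 for every (j,k) ∈ D̂_N, where F(j,k) = −c² if k = j+1 and F(j,k) = 0 otherwise. -/
/-- The interior of the discrete simplex: `D̂_N = {(j,k) : 2 ≤ j < k ≤ N−1}`. -/
def inDhat (N : ℕ) (j k : ℤ) : Prop := 2 ≤ j ∧ j < k ∧ k ≤ (N : ℤ) - 1

/-- Its boundary: `∂D̂_N = {(1,k) : 3 ≤ k ≤ N−1} ∪ {(j,N) : 2 ≤ j ≤ N−2}`. -/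
def inBdry (N : ℕ) (j k : ℤ) : Prop :=
  (j = 1 ∧ 3 ≤ k ∧ k ≤ (N : ℤ) - 1) ∨ (k = (N : ℤ) ∧ 2 ≤ j ∧ j ≤ (N : ℤ) - 2)

/-- The absorbed random-walk generator `ℒ_N` on the discrete simplex: the full
discrete Laplacian off the diagonal, and the one-sided differences
`[φ(k−1,k+1) − φ(k,k+1)] + [φ(k,k+2) − φ(k,k+1)]` at diagonal points `(k,k+1)`. -/
def Lrw (φ : ℤ → ℤ → ℝ) (j k : ℤ) : ℝ :=
  if 1 < k - j then
    φ (j-1) k + φ (j+1) k + φ j (k-1) + φ j (k+1) - 4 * φ j k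
  else
    (φ (j-1) k - φ j k) + (φ j (k+1) - φ j k)

lemma lrw_sub (φ ψ : ℤ → ℤ → ℝ) (j k : ℤ) :
    Lrw (fun a b => φ a b - ψ a b) j k = Lrw φ j k - Lrw ψ j k := by
  unfold Lrw; split <;> ring

/-- Maximum principle: a harmonic function vanishing on the boundary is ≤ 0. -/
lemma maxle (N : ℕ) (hN : 4 ≤ N) (η : ℤ → ℤ → ℝ)
    (hb : ∀ j k : ℤ, inBdry N j k → η j k = 0)
    (hh : ∀ j k : ℤ, inDhat N j k → Lrw η j k = 0)
    (j k : ℤ) (hjk : inDhat N j k ∨ inBdry N j k) : η j k ≤ 0 := by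
  classical
  have hN4 : (4 : ℤ) ≤ (N : ℤ) := by exact_mod_cast hN
  set S : Finset (ℤ × ℤ) :=
    (Finset.Icc (1:ℤ) (N:ℤ) ×ˢ Finset.Icc (1:ℤ) (N:ℤ)).filter
      (fun p => inDhat N p.1 p.2 ∨ inBdry N p.1 p.2) with hS
  have memS : ∀ a b : ℤ, (inDhat N a b ∨ inBdry N a b) → (a, b) ∈ S := by
    intro a b hab
    simp only [hS, Finset.mem_filter, Finset.mem_coe, Finset.mem_product, Finset.mem_Icc]
    refine ⟨⟨⟨?_, ?_⟩, ?_, ?_⟩, hab⟩ <;>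
      · unfold inDhat inBdry at hab; omega
  have hSne : S.Nonempty := ⟨(j, k), memS j k hjk⟩
  set M := S.sup' hSne (fun p => η p.1 p.2) with hM
  have hle : ∀ a b : ℤ, (inDhat N a b ∨ inBdry N a b) → η a b ≤ M := by
    intro a b hab
    exact Finset.le_sup' (fun p => η p.1 p.2) (memS a b hab)
  suffices hM0 : M ≤ 0 from le_trans (hle j k hjk) hM0
  obtain ⟨x, hxS, hxM⟩ := Finset.exists_mem_eq_sup' hSne (fun p => η p.1 p.2)
  set A := S.filter (fun p => η p.1 p.2 = M) with hA
  have hAne : A.Nonempty := ⟨x, Finset.mem_filter.2 ⟨hxS, hxM.symm⟩⟩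
  obtain ⟨y, hyA, hymin⟩ := A.exists_min_image (fun p => p.1) hAne
  have hyS : y ∈ S := (Finset.mem_filter.1 hyA).1
  have hyM : η y.1 y.2 = M := (Finset.mem_filter.1 hyA).2
  have hyin : inDhat N y.1 y.2 ∨ inBdry N y.1 y.2 := (Finset.mem_filter.1 hyS).2
  rcases hyin with hin | hbd
  · exfalso
    obtain ⟨h1, h2, h3⟩ := hin
    set a := y.1; set b := y.2
    have hL := hh a b ⟨h1, h2, h3⟩
    unfold Lrw at hL
    by_cases hd : 1 < b - a
    · rw [if_pos hd] at hL
      have n1 : inDhat N (a-1) b ∨ inBdry N (a-1) b := by unfold inDhat inBdry; omega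
      have n2 : inDhat N (a+1) b ∨ inBdry N (a+1) b := by unfold inDhat inBdry; omega
      have n3 : inDhat N a (b-1) ∨ inBdry N a (b-1) := by unfold inDhat inBdry; omega
      have n4 : inDhat N a (b+1) ∨ inBdry N a (b+1) := by unfold inDhat inBdry; omega
      have u1 := hle _ _ n1
      have u2 := hle _ _ n2
      have u3 := hle _ _ n3
      have u4 := hle _ _ n4
      have e1 : η (a-1) b = M := le_antisymm u1 (by rw [hyM] at hL; linarith)
      have : (a-1, b) ∈ A := Finset.mem_filter.2 ⟨memS _ _ n1, e1⟩
      have := hymin _ this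
      simp only at this
      omega
    · rw [if_neg hd] at hL
      have n1 : inDhat N (a-1) b ∨ inBdry N (a-1) b := by unfold inDhat inBdry; omega
      have n4 : inDhat N a (b+1) ∨ inBdry N a (b+1) := by unfold inDhat inBdry; omega
      have u1 := hle _ _ n1
      have u4 := hle _ _ n4
      have e1 : η (a-1) b = M := le_antisymm u1 (by rw [hyM] at hL; linarith)
      have : (a-1, b) ∈ A := Finset.mem_filter.2 ⟨memS _ _ n1, e1⟩
      have := hymin _ this
      simp only at this
      omega
  · have := hb y.1 y.2 hbd
    rw [this] at hyM
    linarith [hyM]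

/-- `φ(j,k) = −c² (j−1)(N−k)/(N−2)` is the unique function
vanishing on `∂D̂_N` and satisfying `(ℒ_N φ)(j,k) + F(j,k) = 0` on `D̂_N`,
where `F(j,k) = −c² 𝟙{k = j+1}`. -/
theorem stmt19 (N : ℕ) (hN : 4 ≤ N) (c : ℝ) (φ : ℤ → ℤ → ℝ)
    (hφ : ∀ j k : ℤ,
      φ j k = -(c^2) * ((j : ℝ) - 1) * ((N : ℝ) - (k : ℝ)) / ((N : ℝ) - 2)) :
    ((∀ j k : ℤ, inBdry N j k → φ j k = 0) ∧
      (∀ j k : ℤ, inDhat N j k →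
        Lrw φ j k + (if k = j + 1 then -(c^2) else 0) = 0)) ∧
    (∀ ψ : ℤ → ℤ → ℝ,
      (∀ j k : ℤ, inBdry N j k → ψ j k = 0) →
      (∀ j k : ℤ, inDhat N j k →
        Lrw ψ j k + (if k = j + 1 then -(c^2) else 0) = 0) →
      ∀ j k : ℤ, inDhat N j k ∨ inBdry N j k → ψ j k = φ j k) := by
  have hNR : (4 : ℝ) ≤ (N : ℝ) := by exact_mod_cast hN
  have hN2 : (N : ℝ) - 2 ≠ 0 := by linarith
  have hbd : ∀ j k : ℤ, inBdry N j k → φ j k = 0 := by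
    intro j k h
    rw [hφ]
    rcases h with ⟨h1, _, _⟩ | ⟨h1, _, _⟩
    · rw [h1]; push_cast; ring_nf
    · rw [h1]; push_cast; ring_nf
  have hint : ∀ j k : ℤ, inDhat N j k →
      Lrw φ j k + (if k = j + 1 then -(c^2) else 0) = 0 := by
    intro j k ⟨h1, h2, h3⟩
    unfold Lrw
    by_cases hd : 1 < k - j
    · rw [if_pos hd, if_neg (by omega)]
      simp only [hφ]; push_cast; field_simp; ring
    · rw [if_neg hd, if_pos (by omega)]
      have hk : k = j + 1 := by omega
      subst hk
      simp only [hφ]; push_cast; field_simp; ring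
  refine ⟨⟨hbd, hint⟩, ?_⟩
  intro ψ hbψ hhψ j k hjk
  have hb1 : ∀ a b : ℤ, inBdry N a b → ψ a b - φ a b = 0 := by
    intro a b h; rw [hbψ a b h, hbd a b h]; ring
  have hb2 : ∀ a b : ℤ, inBdry N a b → φ a b - ψ a b = 0 := by
    intro a b h; rw [hbψ a b h, hbd a b h]; ring
  have hh1 : ∀ a b : ℤ, inDhat N a b → Lrw (fun u v => ψ u v - φ u v) a b = 0 := by
    intro a b h
    rw [lrw_sub]
    have := hhψ a b h
    have := hint a b h
    linarith
  have hh2 : ∀ a b : ℤ, inDhat N a b → Lrw (fun u v => φ u v - ψ u v) a b = 0 := by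
    intro a b h
    rw [lrw_sub]
    have := hhψ a b h
    have := hint a b h
    linarith
  have h1 := maxle N hN (fun u v => ψ u v - φ u v) hb1 hh1 j k hjk
  have h2 := maxle N hN (fun u v => φ u v - ψ u v) hb2 hh2 j k hjk
  linarith
end
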